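/- arXiv:1610.02611 — 5 statements merged into one kernel-verified Lean document; each statement's English description precedes it below -/
import Mathlib

section
/- There exist constants c₂ > c₁ > 0 and a natural number N such that for all n ≥ N, c₁ · n · log n ≤ ∫_0^∞ F_n(w) dw ≤ c₂ · n · log n, where F_n is the first-intensity integrand of the naive-model random harmonic polynomial with m = n after the change of variables w = |z|². -/
open Finset MeasureTheory Filter Real

/-- `aP k w = ∑_{j=0}^k w^j` -/
noncomputable def aP (k : ℕ) (w : ℝ) : ℝ := ∑ j ∈ range (k + 1), w ^ j

/-- `bP k w = ∑_{j=1}^k j w^j` -/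
noncomputable def bP (k : ℕ) (w : ℝ) : ℝ := ∑ j ∈ range (k + 1), (j : ℝ) * w ^ j

/-- `cP k w = ∑_{j=1}^k j² w^j` -/
noncomputable def cP (k : ℕ) (w : ℝ) : ℝ := ∑ j ∈ range (k + 1), (j : ℝ) ^ 2 * w ^ j

/-- The first-intensity integrand for the naive model with `m = n`,
after the change of variables `w = |z|²`. -/
noncomputable def F (n : ℕ) (w : ℝ) : ℝ :=
  Real.sqrt (aP n w * cP n w * (aP n w * cP n w - bP n w ^ 2)) / (2 * w * aP n w ^ 2)

namespace NLogN


lemma one_le_aP {w : ℝ} (hw : 0 ≤ w) (n : ℕ) : 1 ≤ aP n w := by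
  have h := Finset.single_le_sum (f := fun j => w ^ j)
    (fun j _ => pow_nonneg hw j) (Finset.mem_range.2 (Nat.succ_pos n))
  simpa [aP] using h

lemma aP_pos {w : ℝ} (hw : 0 ≤ w) (n : ℕ) : 0 < aP n w :=
  lt_of_lt_of_le one_pos (one_le_aP hw n)

lemma aP_nonneg {w : ℝ} (hw : 0 ≤ w) (n : ℕ) : 0 ≤ aP n w := (aP_pos hw n).le

lemma bP_nonneg {w : ℝ} (hw : 0 ≤ w) (n : ℕ) : 0 ≤ bP n w :=
  Finset.sum_nonneg fun j _ => mul_nonneg (Nat.cast_nonneg j) (pow_nonneg hw j)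

lemma cP_nonneg {w : ℝ} (hw : 0 ≤ w) (n : ℕ) : 0 ≤ cP n w :=
  Finset.sum_nonneg fun j _ => mul_nonneg (sq_nonneg _) (pow_nonneg hw j)

lemma bP_le {w : ℝ} (hw : 0 ≤ w) (n : ℕ) : bP n w ≤ n * aP n w := by
  rw [bP, aP, Finset.mul_sum]
  apply Finset.sum_le_sum
  intro j hj
  have hj' : (j : ℝ) ≤ n := by
    exact_mod_cast Nat.lt_succ_iff.1 (Finset.mem_range.1 hj)
  exact mul_le_mul_of_nonneg_right hj' (pow_nonneg hw j)

lemma cP_le {w : ℝ} (hw : 0 ≤ w) (n : ℕ) : cP n w ≤ (n:ℝ)^2 * aP n w := by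
  rw [cP, aP, Finset.mul_sum]
  apply Finset.sum_le_sum
  intro j hj
  have hj' : (j : ℝ) ≤ n := by
    exact_mod_cast Nat.lt_succ_iff.1 (Finset.mem_range.1 hj)
  have : (j:ℝ)^2 ≤ (n:ℝ)^2 := pow_le_pow_left₀ (Nat.cast_nonneg j) hj' 2
  exact mul_le_mul_of_nonneg_right this (pow_nonneg hw j)

lemma sq_bP_le {w : ℝ} (hw : 0 ≤ w) (n : ℕ) : bP n w ^ 2 ≤ aP n w * cP n w := by
  have h := Finset.sum_mul_sq_le_sq_mul_sq (range (n+1))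
    (fun j => Real.sqrt (w ^ j)) (fun j => (j:ℝ) * Real.sqrt (w ^ j))
  have e1 : ∀ j ∈ range (n+1), Real.sqrt (w^j) * ((j:ℝ) * Real.sqrt (w^j)) = (j:ℝ) * w^j := by
    intro j _
    have hs : Real.sqrt (w^j) * Real.sqrt (w^j) = w ^ j := Real.mul_self_sqrt (pow_nonneg hw j)
    calc Real.sqrt (w^j) * ((j:ℝ) * Real.sqrt (w^j))
        = (j:ℝ) * (Real.sqrt (w^j) * Real.sqrt (w^j)) := by ring
      _ = (j:ℝ) * w^j := by rw [hs]
  have e2 : ∀ j ∈ range (n+1), Real.sqrt (w^j) ^ 2 = w ^ j := fun j _ => Real.sq_sqrt (pow_nonneg hw j)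
  have e3 : ∀ j ∈ range (n+1), ((j:ℝ) * Real.sqrt (w^j)) ^ 2 = (j:ℝ)^2 * w^j := by
    intro j _
    rw [mul_pow, Real.sq_sqrt (pow_nonneg hw j)]
  rw [Finset.sum_congr rfl e1, Finset.sum_congr rfl e2, Finset.sum_congr rfl e3] at h
  simpa [bP, aP, cP] using h

lemma aP_mul_sub_one {w : ℝ} (n : ℕ) : aP n w * (w - 1) = w ^ (n+1) - 1 := by
  simpa [aP] using geom_sum_mul w (n+1)

lemma aP_le_of_lt_one {w : ℝ} (hw0 : 0 ≤ w) (hw1 : w < 1) (n : ℕ) : aP n w ≤ 1 / (1 - w) := by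
  have h1 : 0 < 1 - w := by linarith
  rw [le_div_iff₀ h1]
  have := aP_mul_sub_one (w := w) (n := n)
  nlinarith [pow_nonneg hw0 (n+1)]

lemma aP_le_of_one_lt {w : ℝ} (hw : 1 < w) (n : ℕ) : aP n w ≤ w ^ (n+1) / (w - 1) := by
  have h1 : 0 < w - 1 := by linarith
  rw [le_div_iff₀ h1, aP_mul_sub_one]
  linarith

lemma pow_le_aP {w : ℝ} (hw : 0 ≤ w) (n : ℕ) : w ^ n ≤ aP n w := by
  have h := Finset.single_le_sum (f := fun j => w ^ j)
    (fun j _ => pow_nonneg hw j) (Finset.self_mem_range_succ (n := n))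
  simpa [aP] using h



-- Bernoulli-type: k * y^k ≤ y / (1-y)
lemma ky_le {y : ℝ} (hy0 : 0 ≤ y) (hy1 : y < 1) (k : ℕ) : (k:ℝ) * y ^ k ≤ y / (1 - y) := by
  have h1 : 0 < 1 - y := by linarith
  rcases eq_or_lt_of_le hy0 with h | hy0'
  · rw [← h]
    rcases Nat.eq_zero_or_pos k with rfl | hk
    · norm_num
    · rw [zero_pow hk.ne']
      norm_num
  · -- y > 0
    have hb := one_add_mul_le_pow (a := 1/y - 1) (by nlinarith [one_div_pos.2 hy0']) k
    have h2 : (1 : ℝ) + 1/y - 1 = 1/y := by ring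
    have h3 : (1 + (1/y - 1)) ^ k = (1/y) ^ k := by rw [show (1:ℝ) + (1/y-1) = 1/y by ring]
    rw [h3] at hb
    have h4 : (1/y)^k = (y^k)⁻¹ := by rw [one_div, inv_pow]
    rw [h4] at hb
    have hyk : 0 < y ^ k := pow_pos hy0' k
    rw [le_div_iff₀ h1]
    have h5 : (k:ℝ) * (1/y - 1) ≤ (y^k)⁻¹ := by nlinarith
    have h6 : (k:ℝ) * (1/y - 1) * y ^ k ≤ 1 := by
      calc (k:ℝ) * (1/y - 1) * y ^ k ≤ (y^k)⁻¹ * y^k := by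
            apply mul_le_mul_of_nonneg_right h5 hyk.le
        _ = 1 := inv_mul_cancel₀ hyk.ne'
    have h7 : (k:ℝ) * (1/y-1) * y^k = (k:ℝ) * y^k * (1-y) / y := by field_simp
    rw [h7] at h6
    rw [div_le_one hy0'] at h6
    nlinarith

lemma sum_k_le {x : ℝ} (hx0 : 0 ≤ x) (hx1 : x < 1) (m : ℕ) :
    ∑ k ∈ range (m+1), (k:ℝ) * x ^ k ≤ x / (1 - x) ^ 2 := by
  have hs : HasSum (fun k : ℕ => (k:ℝ) * x ^ k) (x / (1-x)^2) := by
    have := hasSum_coe_mul_geometric_of_norm_lt_one (𝕜 := ℝ) (r := x)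
      (by rwa [Real.norm_eq_abs, abs_of_nonneg hx0])
    exact this
  exact sum_le_hasSum (range (m+1)) (fun k _ => mul_nonneg (Nat.cast_nonneg k) (pow_nonneg hx0 k)) hs

lemma sum_k2_le {x : ℝ} (hx0 : 0 ≤ x) (hx1 : x < 1) (m : ℕ) :
    ∑ k ∈ range (m+1), (k:ℝ)^2 * x ^ k ≤ 8 * x / (1 - x) ^ 3 := by
  set y := Real.sqrt x with hy
  have hy0 : 0 ≤ y := Real.sqrt_nonneg x
  have hyx : y * y = x := Real.mul_self_sqrt hx0
  have hy1 : y < 1 := by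
    nlinarith [Real.sqrt_nonneg x]
  have h1y : 0 < 1 - y := by linarith
  have hterm : ∀ k ∈ range (m+1), (k:ℝ)^2 * x ^ k ≤ (y/(1-y)) * ((k:ℝ) * y ^ k) := by
    intro k _
    have hxk : x ^ k = y ^ k * y ^ k := by rw [← mul_pow, hyx]
    have h := ky_le hy0 hy1 k
    have hyk : (0:ℝ) ≤ (k:ℝ) * y ^ k := mul_nonneg (Nat.cast_nonneg k) (pow_nonneg hy0 k)
    calc (k:ℝ)^2 * x ^ k = ((k:ℝ) * y^k) * ((k:ℝ) * y^k) := by rw [hxk]; ring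
      _ ≤ (y/(1-y)) * ((k:ℝ) * y ^ k) := mul_le_mul_of_nonneg_right h hyk
  have h2 : ∑ k ∈ range (m+1), (k:ℝ)^2 * x^k ≤ (y/(1-y)) * ∑ k ∈ range (m+1), (k:ℝ) * y ^ k := by
    rw [Finset.mul_sum]
    exact Finset.sum_le_sum hterm
  have h3 : ∑ k ∈ range (m+1), (k:ℝ) * y ^ k ≤ y / (1-y)^2 := sum_k_le hy0 hy1 m
  have h4 : (y/(1-y)) * ∑ k ∈ range (m+1), (k:ℝ) * y ^ k ≤ (y/(1-y)) * (y/(1-y)^2) :=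
    mul_le_mul_of_nonneg_left h3 (by positivity)
  have h5 : (y/(1-y)) * (y/(1-y)^2) = x / (1-y)^3 := by
    field_simp
    rw [← hyx]; ring
  have h6 : (1 - x) / 2 ≤ 1 - y := by nlinarith
  have h7 : x / (1-y)^3 ≤ x / ((1-x)/2)^3 := by
    apply div_le_div_of_nonneg_left hx0 (pow_pos (by linarith : (0:ℝ) < (1-x)/2) 3)
    exact pow_le_pow_left₀ (by linarith) h6 3
  calc ∑ k ∈ range (m+1), (k:ℝ)^2 * x^k ≤ x/(1-y)^3 := by rw [← h5]; linarith
    _ ≤ x / ((1-x)/2)^3 := h7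
    _ = 8 * x / (1-x)^3 := by field_simp; ring



/-- Bernoulli lower bound on the truncated geometric sum. -/
lemma aP_lower {w : ℝ} {n : ℕ} (hw0 : 0 ≤ w) (hw1 : w < 1) (hn : 1 ≤ n)
    (hcond : 1 ≤ ((n:ℝ)+1) * (1-w)) : 1 / (4*(1-w)) ≤ aP n w := by
  have h1w : 0 < 1 - w := by linarith
  set m := ⌊1/(2*(1-w))⌋₊ with hm
  have hm1 : (m:ℝ) ≤ 1/(2*(1-w)) := Nat.floor_le (by positivity)
  have hm2 : 1/(2*(1-w)) < (m:ℝ) + 1 := Nat.lt_floor_add_one _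
  have hmn : m ≤ n := by
    have h2 : 1/(2*(1-w)) ≤ ((n:ℝ)+1)/2 := by
      rw [div_le_div_iff₀ (by positivity) (by norm_num)]
      nlinarith
    have h3 : ((n:ℝ)+1)/2 ≤ n := by
      have : (1:ℝ) ≤ n := by exact_mod_cast hn
      linarith
    have : (m:ℝ) ≤ (n:ℝ) := le_trans hm1 (le_trans h2 h3)
    exact_mod_cast this
  have hsub : ∑ j ∈ range (m+1), w^j ≤ aP n w := by
    apply Finset.sum_le_sum_of_subset_of_nonneg
    · exact Finset.range_subset_range.2 (by omega)
    · intro j _ _; exact pow_nonneg hw0 j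
  have hber : 1 - (m:ℝ)*(1-w) ≤ w^m := by
    have h := one_add_mul_le_pow (a := w - 1) (by linarith) m
    have : (1:ℝ) + (w-1) = w := by ring
    rw [this] at h
    calc 1 - (m:ℝ)*(1-w) = 1 + (m:ℝ)*(w-1) := by ring
      _ ≤ w^m := h
  have hm3 : (m:ℝ)*(1-w) ≤ 1/2 := by
    calc (m:ℝ)*(1-w) ≤ (1/(2*(1-w)))*(1-w) := by
          exact mul_le_mul_of_nonneg_right hm1 h1w.le
      _ = 1/2 := by field_simp
  have hwm : (1:ℝ)/2 ≤ w^m := by linarith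
  have hlow : ((m:ℝ)+1) * (1/2) ≤ ∑ j ∈ range (m+1), w^j := by
    have hterm : ∀ j ∈ range (m+1), (1:ℝ)/2 ≤ w^j := by
      intro j hj
      have hjm : j ≤ m := Nat.lt_succ_iff.1 (Finset.mem_range.1 hj)
      calc (1:ℝ)/2 ≤ w^m := hwm
        _ ≤ w^j := pow_le_pow_of_le_one hw0 hw1.le hjm
    have h := Finset.card_nsmul_le_sum (range (m+1)) (fun j => w^j) (1/2) hterm
    simpa [Finset.card_range, nsmul_eq_mul, add_comm, add_mul, mul_comm] using h
  have : 1/(4*(1-w)) ≤ ((m:ℝ)+1)*(1/2) := by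
    rw [div_le_iff₀ (by positivity)]
    have hhalf : (1/(2*(1-w)))*(1-w) = 1/2 := by field_simp
    nlinarith [mul_lt_mul_of_pos_right hm2 h1w]
  linarith

/-- reflection: `aP n w = w^n * aP n (1/w)` for `w ≠ 0`. -/
lemma aP_reflect {w : ℝ} (hw : w ≠ 0) (n : ℕ) : aP n w = w^n * aP n (1/w) := by
  rw [aP, aP, Finset.mul_sum]
  rw [← Finset.sum_range_reflect (fun j => w ^ j) (n+1)]
  apply Finset.sum_congr rfl
  intro j hj
  have hjn : j ≤ n := Nat.lt_succ_iff.1 (Finset.mem_range.1 hj)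
  have : n + 1 - 1 - j = n - j := by omega
  rw [this, one_div, inv_pow, pow_sub₀ w hw hjn]

noncomputable def Q (n : ℕ) (w : ℝ) : ℝ := ∑ j ∈ range (n+1), ((n:ℝ) - j)^2 * w^j

lemma Q_nonneg {w : ℝ} (hw : 0 ≤ w) (n : ℕ) : 0 ≤ Q n w :=
  Finset.sum_nonneg fun j _ => mul_nonneg (sq_nonneg _) (pow_nonneg hw j)

lemma Q_eq (n : ℕ) (w : ℝ) :
    Q n w = (n:ℝ)^2 * aP n w - 2*(n:ℝ)*bP n w + cP n w := by
  rw [Q, aP, bP, cP, Finset.mul_sum, Finset.mul_sum, ← Finset.sum_sub_distrib,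
    ← Finset.sum_add_distrib]
  apply Finset.sum_congr rfl
  intro j _
  ring

lemma Q_reflect {w : ℝ} (hw : w ≠ 0) (n : ℕ) : Q n w = w^n * cP n (1/w) := by
  rw [Q, cP, Finset.mul_sum]
  rw [← Finset.sum_range_reflect (fun j => ((n:ℝ) - j)^2 * w^j) (n+1)]
  apply Finset.sum_congr rfl
  intro j hj
  have hjn : j ≤ n := Nat.lt_succ_iff.1 (Finset.mem_range.1 hj)
  have h1 : n + 1 - 1 - j = n - j := by omega
  have h2 : ((n:ℝ) - (↑(n - j)))^2 = (j:ℝ)^2 := by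
    rw [Nat.cast_sub hjn]; ring
  rw [h1, h2, one_div, inv_pow, pow_sub₀ w hw hjn]
  ring

lemma D_le_aQ {w : ℝ} (hw : 0 ≤ w) (n : ℕ) :
    aP n w * cP n w - bP n w^2 ≤ aP n w * Q n w := by
  rw [Q_eq]
  nlinarith [sq_nonneg ((n:ℝ) * aP n w - bP n w)]

/-- For `w ≥ 1`, the mean is at least `n/2`: `n·a ≤ 2b`. -/
lemma na_le_two_bP {w : ℝ} (hw : 1 ≤ w) (n : ℕ) : (n:ℝ) * aP n w ≤ 2 * bP n w := by
  have hT : 2*bP n w - (n:ℝ)*aP n w = ∑ j ∈ range (n+1), ((2*(j:ℝ)) - n) * w^j := by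
    rw [bP, aP, Finset.mul_sum, Finset.mul_sum, ← Finset.sum_sub_distrib]
    apply Finset.sum_congr rfl
    intro j _
    ring
  have hT2 : ∑ j ∈ range (n+1), ((2*(j:ℝ)) - n) * w^j
      = ∑ j ∈ range (n+1), ((n:ℝ) - 2*j) * w^(n-j) := by
    rw [← Finset.sum_range_reflect (fun j => ((2*(j:ℝ)) - n) * w^j) (n+1)]
    apply Finset.sum_congr rfl
    intro j hj
    have hjn : j ≤ n := Nat.lt_succ_iff.1 (Finset.mem_range.1 hj)
    have h1 : n + 1 - 1 - j = n - j := by omega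
    rw [h1, Nat.cast_sub hjn]
    ring_nf
  have key : 0 ≤ 2 * (2*bP n w - (n:ℝ)*aP n w) := by
    have : 2 * (2*bP n w - (n:ℝ)*aP n w)
        = ∑ j ∈ range (n+1), (((2*(j:ℝ)) - n) * w^j + ((n:ℝ) - 2*j) * w^(n-j)) := by
      rw [Finset.sum_add_distrib, ← hT2, ← hT]
      ring
    rw [this]
    apply Finset.sum_nonneg
    intro j hj
    have hjn : j ≤ n := Nat.lt_succ_iff.1 (Finset.mem_range.1 hj)
    rcases le_total (2*j) n with h | h
    · have hc : (2*(j:ℝ)) - n ≤ 0 := by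
        have : (2*j:ℝ) ≤ n := by exact_mod_cast h
        push_cast at this ⊢
        linarith
      have hp : w^j ≤ w^(n-j) := pow_le_pow_right₀ hw (by omega)
      nlinarith
    · have hc : (0:ℝ) ≤ (2*(j:ℝ)) - n := by
        have : (n:ℝ) ≤ 2*j := by exact_mod_cast h
        linarith
      have hp : w^(n-j) ≤ w^j := pow_le_pow_right₀ hw (by omega)
      nlinarith
  linarith

lemma twoD (n : ℕ) (w : ℝ) :
    2*(aP n w * cP n w - bP n w^2) =
    ∑ i ∈ range (n+1), ∑ j ∈ range (n+1), ((i:ℝ)-(j:ℝ))^2 * (w^i * w^j) := by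
  have h1 : aP n w * cP n w = ∑ i ∈ range (n+1), ∑ j ∈ range (n+1), w ^ i * ((j:ℝ)^2 * w ^ j) :=
    Finset.sum_mul_sum _ _ _ _
  have h2 : cP n w * aP n w = ∑ i ∈ range (n+1), ∑ j ∈ range (n+1), ((i:ℝ)^2 * w ^ i) * w ^ j :=
    Finset.sum_mul_sum _ _ _ _
  have h3 : bP n w * bP n w = ∑ i ∈ range (n+1), ∑ j ∈ range (n+1), ((i:ℝ) * w ^ i) * ((j:ℝ) * w ^ j) :=
    Finset.sum_mul_sum _ _ _ _
  have key : 2*(aP n w * cP n w - bP n w^2)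
      = aP n w * cP n w + cP n w * aP n w - 2 * (bP n w * bP n w) := by ring
  rw [key, h1, h2, h3, ← Finset.sum_add_distrib, Finset.mul_sum, ← Finset.sum_sub_distrib]
  apply Finset.sum_congr rfl
  intro i _
  rw [← Finset.sum_add_distrib, Finset.mul_sum, ← Finset.sum_sub_distrib]
  apply Finset.sum_congr rfl
  intro j _
  ring

lemma D_lower {w : ℝ} {n k : ℕ} (hw : 1 ≤ w) (hk1 : 1 ≤ k) (hk3 : 3*k ≤ n) :
    (k:ℝ)^4 * w^(2*n - 4*k) ≤ 2*(aP n w * cP n w - bP n w^2) := by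
  rw [twoD]
  have hw0 : (0:ℝ) ≤ w := by linarith
  set f : ℕ × ℕ → ℝ := fun p => ((p.1:ℝ)-(p.2:ℝ))^2 * (w^p.1 * w^p.2) with hf
  have hrw : ∑ i ∈ range (n+1), ∑ j ∈ range (n+1), ((i:ℝ)-(j:ℝ))^2 * (w^i * w^j)
      = ∑ p ∈ (range (n+1)) ×ˢ (range (n+1)), f p := by
    rw [Finset.sum_product]
  rw [hrw]
  set S : Finset (ℕ × ℕ) := (Icc (n-3*k) (n-2*k)) ×ˢ (Icc (n-k) n) with hS
  have hsub : S ⊆ (range (n+1)) ×ˢ (range (n+1)) := by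
    apply Finset.product_subset_product
    · intro x hx
      rw [Finset.mem_Icc] at hx
      rw [Finset.mem_range]
      omega
    · intro x hx
      rw [Finset.mem_Icc] at hx
      rw [Finset.mem_range]
      omega
  have hnonneg : ∀ p ∈ (range (n+1)) ×ˢ (range (n+1)), p ∉ S → 0 ≤ f p := by
    intro p _ _
    exact mul_nonneg (sq_nonneg _) (mul_nonneg (pow_nonneg hw0 _) (pow_nonneg hw0 _))
  have hterm : ∀ p ∈ S, (k:ℝ)^2 * w^(2*n-4*k) ≤ f p := by
    intro p hp
    rw [hS, Finset.mem_product, Finset.mem_Icc, Finset.mem_Icc] at hp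
    obtain ⟨⟨h11, h12⟩, h21, h22⟩ := hp
    have hgap : p.1 + k ≤ p.2 := by omega
    have hgapR : (k:ℝ) ≤ (p.2:ℝ) - (p.1:ℝ) := by
      have : (p.1 + k : ℕ) ≤ p.2 := hgap
      have := (Nat.cast_le (α := ℝ)).2 this
      push_cast at this
      linarith
    have hsq : (k:ℝ)^2 ≤ ((p.1:ℝ)-(p.2:ℝ))^2 := by
      have h0 : (0:ℝ) ≤ (k:ℝ) := Nat.cast_nonneg k
      nlinarith
    have hpow : w^(2*n-4*k) ≤ w^p.1 * w^p.2 := by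
      rw [← pow_add]
      apply pow_le_pow_right₀ hw
      omega
    have h0 : (0:ℝ) ≤ w^(2*n-4*k) := pow_nonneg hw0 _
    calc (k:ℝ)^2 * w^(2*n-4*k) ≤ ((p.1:ℝ)-(p.2:ℝ))^2 * w^(2*n-4*k) :=
          mul_le_mul_of_nonneg_right hsq h0
      _ ≤ ((p.1:ℝ)-(p.2:ℝ))^2 * (w^p.1 * w^p.2) :=
          mul_le_mul_of_nonneg_left hpow (sq_nonneg _)
  have hcard : S.card = (k+1) * (k+1) := by
    rw [hS, Finset.card_product, Nat.card_Icc, Nat.card_Icc]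
    congr 1 <;> omega
  have h1 : S.card • ((k:ℝ)^2 * w^(2*n-4*k)) ≤ ∑ p ∈ S, f p :=
    Finset.card_nsmul_le_sum S f _ hterm
  have h2 : ∑ p ∈ S, f p ≤ ∑ p ∈ (range (n+1)) ×ˢ (range (n+1)), f p :=
    Finset.sum_le_sum_of_subset_of_nonneg hsub hnonneg
  have h3 : (k:ℝ)^4 * w^(2*n-4*k) ≤ S.card • ((k:ℝ)^2 * w^(2*n-4*k)) := by
    rw [hcard, nsmul_eq_mul]
    push_cast
    have h0 : (0:ℝ) ≤ w^(2*n-4*k) := pow_nonneg hw0 _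
    have hk0 : (0:ℝ) ≤ (k:ℝ) := Nat.cast_nonneg k
    have hkk : (k:ℝ)^4 ≤ ((k:ℝ)+1)*((k:ℝ)+1)*(k:ℝ)^2 := by nlinarith
    calc (k:ℝ)^4 * w^(2*n-4*k) ≤ (((k:ℝ)+1)*((k:ℝ)+1)*(k:ℝ)^2) * w^(2*n-4*k) :=
          mul_le_mul_of_nonneg_right hkk h0
      _ = ((k:ℝ)+1)*((k:ℝ)+1)*((k:ℝ)^2*w^(2*n-4*k)) := by ring
  linarith

lemma F_nonneg {n : ℕ} {w : ℝ} (hw : 0 < w) : 0 ≤ F n w := by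
  apply div_nonneg (Real.sqrt_nonneg _)
  have := aP_pos hw.le n
  positivity

lemma D_nonneg {n : ℕ} {w : ℝ} (hw : 0 ≤ w) : 0 ≤ aP n w * cP n w - bP n w^2 := by
  have := sq_bP_le hw n; linarith

lemma F_le_form {n : ℕ} {w β : ℝ} (hw : 0 < w) (hβ : 0 ≤ β)
    (hD : aP n w * cP n w - bP n w^2 ≤ β^2 * aP n w^2) :
    F n w ≤ (β^2 + n*β) / (2*w) := by
  have hw0 : (0:ℝ) ≤ w := hw.le
  have hA : 0 < aP n w := aP_pos hw0 n
  have hB0 : 0 ≤ bP n w := bP_nonneg hw0 n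
  have hD0 : 0 ≤ aP n w * cP n w - bP n w^2 := D_nonneg hw0
  have hB : bP n w ≤ n * aP n w := bP_le hw0 n
  have hn0 : (0:ℝ) ≤ (n:ℝ) := Nat.cast_nonneg n
  have key : aP n w * cP n w * (aP n w * cP n w - bP n w^2) ≤ ((β^2 + n*β) * aP n w^2)^2 := by
    have hB2 : bP n w^2 ≤ (n:ℝ)^2 * aP n w^2 := by nlinarith
    have hstep : (bP n w^2 + (aP n w * cP n w - bP n w^2)) * (aP n w * cP n w - bP n w^2)
        ≤ ((n:ℝ)^2 * aP n w^2 + β^2 * aP n w^2) * (β^2 * aP n w^2) :=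
      mul_le_mul (by linarith) hD hD0 (by positivity)
    nlinarith [mul_nonneg (mul_nonneg hn0 (mul_nonneg hβ (mul_nonneg hβ hβ))) (sq_nonneg (aP n w^2))]
  have hden : 0 < 2*w*aP n w^2 := by positivity
  have hsq : Real.sqrt (aP n w * cP n w * (aP n w * cP n w - bP n w ^ 2)) ≤ (β^2 + n*β) * aP n w^2 := by
    have h1 := Real.sqrt_le_sqrt key
    rwa [Real.sqrt_sq (by positivity)] at h1
  calc F n w ≤ ((β^2+n*β) * aP n w^2) / (2*w*aP n w^2) := by
        simp only [F]
        exact div_le_div_of_nonneg_right hsq hden.le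
    _ = (β^2+n*β)/(2*w) := by field_simp

lemma F_ge_form {n : ℕ} {w : ℝ} (hw : 0 < w) :
    bP n w * Real.sqrt (aP n w * cP n w - bP n w^2) / (2*w*aP n w^2) ≤ F n w := by
  have hw0 := hw.le
  have hA : 0 < aP n w := aP_pos hw0 n
  have hD0 : 0 ≤ aP n w * cP n w - bP n w^2 := D_nonneg hw0
  have hB0 : 0 ≤ bP n w := bP_nonneg hw0 n
  have hden : 0 < 2*w*aP n w^2 := by positivity
  have h1 : bP n w^2 * (aP n w * cP n w - bP n w^2)
      ≤ aP n w * cP n w * (aP n w * cP n w - bP n w^2) :=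
    mul_le_mul_of_nonneg_right (sq_bP_le hw0 n) hD0
  have h2 : bP n w * Real.sqrt (aP n w * cP n w - bP n w^2)
      = Real.sqrt (bP n w^2 * (aP n w * cP n w - bP n w^2)) := by
    rw [Real.sqrt_mul (sq_nonneg _), Real.sqrt_sq hB0]
  simp only [F]
  rw [h2]
  exact div_le_div_of_nonneg_right (Real.sqrt_le_sqrt h1) hden.le

/-- On `(0,1)`: `F ≤ 4/((1-w)³ a)`. -/
lemma F_le_left {n : ℕ} {w : ℝ} (hw0 : 0 < w) (hw1 : w < 1) :
    F n w ≤ 4 / ((1-w)^3 * aP n w) := by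
  have hw0' := hw0.le
  have hA1 : 1 ≤ aP n w := one_le_aP hw0' n
  have hA : 0 < aP n w := by linarith
  have hC : 0 ≤ cP n w := cP_nonneg hw0' n
  have hD0 : 0 ≤ aP n w * cP n w - bP n w^2 := D_nonneg hw0'
  have h1w : 0 < 1 - w := by linarith
  have hden : 0 < 2*w*aP n w^2 := by positivity
  have hsq : Real.sqrt (aP n w * cP n w * (aP n w * cP n w - bP n w ^ 2)) ≤ aP n w * cP n w := by
    have h1 : aP n w * cP n w * (aP n w * cP n w - bP n w ^ 2) ≤ (aP n w * cP n w)^2 := by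
      nlinarith [mul_nonneg hA.le hC, sq_nonneg (bP n w)]
    have h2 := Real.sqrt_le_sqrt h1
    rwa [Real.sqrt_sq (mul_nonneg hA.le hC)] at h2
  have hCb : cP n w ≤ 8*w/(1-w)^3 := by
    have h := sum_k2_le hw0' hw1 n
    simpa [cP] using h
  have hF : F n w ≤ aP n w * cP n w / (2*w*aP n w^2) := by
    simp only [F]
    exact div_le_div_of_nonneg_right hsq hden.le
  have heq : aP n w * cP n w / (2*w*aP n w^2) = cP n w/(2*w*aP n w) := by
    field_simp
  have h3 : cP n w/(2*w*aP n w) ≤ (8*w/(1-w)^3)/(2*w*aP n w) :=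
    div_le_div_of_nonneg_right hCb (by positivity)
  have h4 : (8*w/(1-w)^3)/(2*w*aP n w) = 4/((1-w)^3 * aP n w) := by
    field_simp
    ring
  calc F n w ≤ aP n w * cP n w / (2*w*aP n w^2) := hF
    _ = cP n w/(2*w*aP n w) := heq
    _ ≤ (8*w/(1-w)^3)/(2*w*aP n w) := h3
    _ = 4/((1-w)^3 * aP n w) := h4

/-- `(0, 1/2]`: `F ≤ 32`. -/
lemma F_le_R0 {n : ℕ} {w : ℝ} (hw0 : 0 < w) (hw : w ≤ 1/2) : F n w ≤ 32 := by
  have hw1 : w < 1 := by linarith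
  have hA1 : 1 ≤ aP n w := one_le_aP hw0.le n
  have h1w : (1:ℝ)/2 ≤ 1 - w := by linarith
  have h := F_le_left (n := n) hw0 hw1
  have hd : (1:ℝ)/8 ≤ (1-w)^3 * aP n w := by
    calc (1:ℝ)/8 = (1/2)^3 * 1 := by norm_num
      _ ≤ (1-w)^3 * aP n w := by
          apply mul_le_mul (pow_le_pow_left₀ (by norm_num) h1w 3) hA1 zero_le_one
          positivity
  calc F n w ≤ 4 / ((1-w)^3 * aP n w) := h
    _ ≤ 4 / (1/8) := div_le_div_of_nonneg_left (by norm_num) (by norm_num) hd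
    _ = 32 := by norm_num

/-- `[1/2, 1-1/n]`: `F ≤ 16/(1-w)²`. -/
lemma F_le_R1 {n : ℕ} {w : ℝ} (hn : 1 ≤ n) (hw0 : 1/2 ≤ w) (hw1 : w ≤ 1 - 1/(n:ℝ)) :
    F n w ≤ 16/(1-w)^2 := by
  have hn0 : (0:ℝ) < n := by exact_mod_cast hn
  have hwpos : (0:ℝ) < w := by linarith
  have hw1' : w < 1 := by
    have : (0:ℝ) < 1/(n:ℝ) := by positivity
    linarith
  have h1w : 0 < 1 - w := by linarith
  have hcond : 1 ≤ ((n:ℝ)+1) * (1-w) := by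
    have h1 : 1/(n:ℝ) ≤ 1 - w := by linarith
    have h2 : ((n:ℝ)+1) * (1/(n:ℝ)) ≤ ((n:ℝ)+1) * (1-w) :=
      mul_le_mul_of_nonneg_left h1 (by positivity)
    have h3 : (1:ℝ) ≤ ((n:ℝ)+1) * (1/(n:ℝ)) := by
      rw [mul_one_div, le_div_iff₀ hn0]
      linarith
    linarith
  have hA : 1/(4*(1-w)) ≤ aP n w := aP_lower hwpos.le hw1' hn hcond
  have h := F_le_left (n := n) hwpos hw1'
  have hApos : 0 < aP n w := aP_pos hwpos.le n
  have hd : (1-w)^2/4 ≤ (1-w)^3 * aP n w := by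
    have : (1-w)^3 * (1/(4*(1-w))) ≤ (1-w)^3 * aP n w :=
      mul_le_mul_of_nonneg_left hA (by positivity)
    calc (1-w)^2/4 = (1-w)^3 * (1/(4*(1-w))) := by field_simp
      _ ≤ (1-w)^3 * aP n w := this
  calc F n w ≤ 4 / ((1-w)^3 * aP n w) := h
    _ ≤ 4 / ((1-w)^2/4) := div_le_div_of_nonneg_left (by norm_num) (by positivity) hd
    _ = 16/(1-w)^2 := by field_simp; ring

/-- middle region: `F ≤ 2n²`. -/
lemma F_le_R2 {n : ℕ} {w : ℝ} (hw0 : 1/2 ≤ w) : F n w ≤ 2*(n:ℝ)^2 := by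
  have hwpos : (0:ℝ) < w := by linarith
  have hD : aP n w * cP n w - bP n w^2 ≤ (n:ℝ)^2 * aP n w^2 := by
    have h1 : cP n w ≤ (n:ℝ)^2 * aP n w := cP_le hwpos.le n
    have h2 : 0 < aP n w := aP_pos hwpos.le n
    nlinarith [sq_nonneg (bP n w)]
  have h := F_le_form (n := n) hwpos (Nat.cast_nonneg n) hD
  have h2 : ((n:ℝ)^2 + (n:ℝ)*(n:ℝ))/(2*w) ≤ 2*(n:ℝ)^2 := by
    rw [div_le_iff₀ (by linarith)]
    nlinarith [sq_nonneg (n:ℝ)]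
  exact h.trans h2

/-- `[1+1/n, 2]`: `F ≤ 32/(w-1)² + 4n/(w-1)`. -/
lemma F_le_R3 {n : ℕ} {w : ℝ} (hn : 1 ≤ n) (hw0 : 1 + 1/(n:ℝ) ≤ w) (hw1 : w ≤ 2) :
    F n w ≤ 32/(w-1)^2 + 4*(n:ℝ)/(w-1) := by
  have hn0 : (0:ℝ) < n := by exact_mod_cast hn
  have hw1' : (1:ℝ) < w := by
    have : (0:ℝ) < 1/(n:ℝ) := by positivity
    linarith
  have ht : (0:ℝ) < w - 1 := by linarith
  have hwpos : (0:ℝ) < w := by linarith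
  have hx0 : (0:ℝ) < 1/w := by positivity
  have hx1 : 1/w < 1 := by rw [div_lt_one hwpos]; linarith
  have h1x : 1 - 1/w = (w-1)/w := by field_simp
  have hcond : 1 ≤ ((n:ℝ)+1) * (1-1/w) := by
    have h5 : (1:ℝ) ≤ (n:ℝ)*(w-1) := by
      have h6 := mul_le_mul_of_nonneg_left (show 1/(n:ℝ) ≤ w - 1 by linarith) hn0.le
      rwa [mul_one_div, div_self hn0.ne'] at h6
    rw [h1x, ← mul_div_assoc, le_div_iff₀ hwpos]
    nlinarith
  have hAx : 1/(4*(1-1/w)) ≤ aP n (1/w) := aP_lower hx0.le hx1 hn hcond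
  have hrefl : aP n w = w^n * aP n (1/w) := aP_reflect hwpos.ne' n
  have hcx : cP n (1/w) ≤ 8*(1/w)/(1-1/w)^3 := by
    simpa [cP] using sum_k2_le hx0.le hx1 n
  have hpnn : (0:ℝ) ≤ w^n := pow_nonneg hwpos.le n
  have e1 : 8*(1/w)/(1-1/w)^3 = 8*w^2/(w-1)^3 := by
    rw [h1x]; field_simp
  have e2 : (64/(w-1)^2) * (1/(4*(1-1/w))) = 16*w/(w-1)^3 := by
    rw [h1x]; field_simp; ring
  have hQb : Q n w ≤ (64/(w-1)^2) * aP n w := by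
    calc Q n w = w^n * cP n (1/w) := Q_reflect hwpos.ne' n
      _ ≤ w^n * (8*(1/w)/(1-1/w)^3) := mul_le_mul_of_nonneg_left hcx hpnn
      _ ≤ w^n * ((64/(w-1)^2) * (1/(4*(1-1/w)))) := by
          apply mul_le_mul_of_nonneg_left _ hpnn
          rw [e1, e2]
          apply div_le_div_of_nonneg_right _ (by positivity)
          nlinarith
      _ = (64/(w-1)^2) * (w^n * (1/(4*(1-1/w)))) := by ring
      _ ≤ (64/(w-1)^2) * aP n w := by
          apply mul_le_mul_of_nonneg_left _ (by positivity)
          rw [hrefl]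
          exact mul_le_mul_of_nonneg_left hAx hpnn
  have hD : aP n w * cP n w - bP n w^2 ≤ (8/(w-1))^2 * aP n w^2 := by
    have hApos : 0 < aP n w := aP_pos hwpos.le n
    have h1 := D_le_aQ hwpos.le n
    have h2 : aP n w * Q n w ≤ aP n w * ((64/(w-1)^2) * aP n w) :=
      mul_le_mul_of_nonneg_left hQb hApos.le
    have h3 : (8/(w-1))^2 = 64/(w-1)^2 := by rw [div_pow]; norm_num
    calc aP n w * cP n w - bP n w^2 ≤ aP n w * Q n w := h1
      _ ≤ aP n w * ((64/(w-1)^2) * aP n w) := h2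
      _ = (8/(w-1))^2 * aP n w^2 := by rw [h3]; ring
  have h := F_le_form (n := n) hwpos (by positivity) hD
  have h3 : (8/(w-1))^2 = 64/(w-1)^2 := by rw [div_pow]; norm_num
  have hfin : ((8/(w-1))^2 + (n:ℝ)*(8/(w-1)))/(2*w) ≤ 32/(w-1)^2 + 4*(n:ℝ)/(w-1) := by
    have hnn : 0 ≤ (8/(w-1))^2 + (n:ℝ)*(8/(w-1)) := by positivity
    calc ((8/(w-1))^2 + (n:ℝ)*(8/(w-1)))/(2*w) ≤ ((8/(w-1))^2 + (n:ℝ)*(8/(w-1)))/2 :=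
          div_le_div_of_nonneg_left hnn (by norm_num) (by linarith)
      _ = 32/(w-1)^2 + 4*(n:ℝ)/(w-1) := by rw [h3]; ring
  exact h.trans hfin

/-- `[2, ∞)`: `F ≤ 32/w² + 4n/(w√w)`. -/
lemma F_le_R4 {n : ℕ} {w : ℝ} (hw : 2 ≤ w) :
    F n w ≤ 32/w^2 + 4*(n:ℝ)/(w*Real.sqrt w) := by
  have hwpos : (0:ℝ) < w := by linarith
  have hs : 0 < Real.sqrt w := Real.sqrt_pos.2 hwpos
  have hx0 : (0:ℝ) < 1/w := by positivity
  have hx12 : 1/w ≤ 1/2 := by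
    apply div_le_div_of_nonneg_left one_pos.le (by norm_num) hw
  have hx1 : 1/w < 1 := by linarith
  have hpnn : (0:ℝ) ≤ w^n := pow_nonneg hwpos.le n
  have hQb : Q n w ≤ (64*(1/w)) * aP n w := by
    calc Q n w = w^n * cP n (1/w) := Q_reflect hwpos.ne' n
      _ ≤ w^n * (8*(1/w)/(1-1/w)^3) :=
          mul_le_mul_of_nonneg_left (by simpa [cP] using sum_k2_le hx0.le hx1 n) hpnn
      _ ≤ w^n * (64*(1/w)) := by
          apply mul_le_mul_of_nonneg_left _ hpnn
          have h18 : ((1:ℝ)/2)^3 ≤ (1-1/w)^3 := pow_le_pow_left₀ (by norm_num) (by linarith) 3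
          have h18' : (1:ℝ)/8 ≤ (1-1/w)^3 := by
            calc (1:ℝ)/8 = ((1:ℝ)/2)^3 := by norm_num
              _ ≤ (1-1/w)^3 := h18
          rw [div_le_iff₀ (by linarith)]
          nlinarith [mul_le_mul_of_nonneg_left h18' (by positivity : (0:ℝ) ≤ 64*(1/w))]
      _ = (64*(1/w)) * w^n := by ring
      _ ≤ (64*(1/w)) * aP n w :=
          mul_le_mul_of_nonneg_left (pow_le_aP hwpos.le n) (by positivity)
  have hD : aP n w * cP n w - bP n w^2 ≤ (8/Real.sqrt w)^2 * aP n w^2 := by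
    have hApos : 0 < aP n w := aP_pos hwpos.le n
    have h3 : (8/Real.sqrt w)^2 = 64*(1/w) := by
      rw [div_pow, Real.sq_sqrt hwpos.le]
      ring
    calc aP n w * cP n w - bP n w^2 ≤ aP n w * Q n w := D_le_aQ hwpos.le n
      _ ≤ aP n w * ((64*(1/w)) * aP n w) := mul_le_mul_of_nonneg_left hQb hApos.le
      _ = (8/Real.sqrt w)^2 * aP n w^2 := by rw [h3]; ring
  have h := F_le_form (n := n) hwpos (by positivity) hD
  have hfin : ((8/Real.sqrt w)^2 + (n:ℝ)*(8/Real.sqrt w))/(2*w) = 32/w^2 + 4*(n:ℝ)/(w*Real.sqrt w) := by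
    have h3 : (8/Real.sqrt w)^2 = 64*(1/w) := by
      rw [div_pow, Real.sq_sqrt hwpos.le]
      ring
    rw [h3]
    field_simp
    ring
  exact h.trans (le_of_eq hfin)

set_option maxHeartbeats 1000000 in
/-- Lower bound on `[1+4/n, 2]`: `F ≥ n/(1300(w-1))`. -/
lemma F_ge_R {n : ℕ} {w : ℝ} (hn : 16 ≤ n) (hw0 : 1 + 4/(n:ℝ) ≤ w) (hw1 : w ≤ 2) :
    (n:ℝ)/(1300*(w-1)) ≤ F n w := by
  have hn0 : (0:ℝ) < n := by
    have : (16:ℝ) ≤ n := by exact_mod_cast hn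
    linarith
  have hw1' : (1:ℝ) < w := by
    have : (0:ℝ) < 4/(n:ℝ) := by positivity
    linarith
  have ht : (0:ℝ) < w - 1 := by linarith
  have hwpos : (0:ℝ) < w := by linarith
  set k := ⌈1/(w-1)⌉₊ with hkdef
  have hk1 : 1 ≤ k := Nat.one_le_ceil_iff.2 (by positivity)
  have hklo : 1/(w-1) ≤ (k:ℝ) := Nat.le_ceil _
  have hkhi : (k:ℝ) < 1/(w-1) + 1 := Nat.ceil_lt_add_one (by positivity)
  have hwn4 : 4/(n:ℝ) ≤ w - 1 := by linarith
  have hinv : 1/(w-1) ≤ (n:ℝ)/4 := by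
    rw [div_le_div_iff₀ ht (by norm_num)]
    have h6 := mul_le_mul_of_nonneg_left hwn4 hn0.le
    rw [mul_div_cancel₀ _ hn0.ne'] at h6
    nlinarith
  have hk3 : 3*k ≤ n := by
    have h16 : (16:ℝ) ≤ n := by exact_mod_cast hn
    have h2 : ((3*k:ℕ):ℝ) ≤ (n:ℝ) := by
      push_cast
      nlinarith
    exact_mod_cast h2
  have hDl := D_lower (n := n) (w := w) hw1'.le hk1 hk3
  have hpow : w^(2*n) = w^(2*n - 4*k) * w^(4*k) := by
    rw [← pow_add]
    congr 1
    omega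
  have hwk : w^(4*k) ≤ 3000 := by
    have he : w ≤ Real.exp (w-1) := by
      have := Real.add_one_le_exp (w-1); linarith
    have h2 : w^(4*k) ≤ Real.exp (w-1)^(4*k) := pow_le_pow_left₀ hwpos.le he (4*k)
    have h3 : Real.exp (w-1)^(4*k) = Real.exp (((4*k:ℕ):ℝ)*(w-1)) := (Real.exp_nat_mul _ _).symm
    have h4 : ((4*k:ℕ):ℝ)*(w-1) ≤ 8 := by
      push_cast
      have h5 : (k:ℝ)*(w-1) ≤ (1/(w-1) + 1)*(w-1) :=
        mul_le_mul_of_nonneg_right hkhi.le ht.le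
      have he2 : (1/(w-1))*(w-1) = 1 := by field_simp
      nlinarith
    have h6 : Real.exp 8 ≤ 3000 := by
      have h7 : Real.exp 8 = Real.exp 1^8 := by
        rw [← Real.exp_nat_mul]; norm_num
      have h8 : Real.exp 1^8 ≤ 2.7182818286^8 :=
        pow_le_pow_left₀ (Real.exp_pos 1).le Real.exp_one_lt_d9.le 8
      calc Real.exp 8 = Real.exp 1^8 := h7
        _ ≤ 2.7182818286^8 := h8
        _ ≤ 3000 := by norm_num
    calc w^(4*k) ≤ Real.exp (w-1)^(4*k) := h2
      _ = Real.exp (((4*k:ℕ):ℝ)*(w-1)) := h3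
      _ ≤ Real.exp 8 := Real.exp_le_exp.2 h4
      _ ≤ 3000 := h6
  have hDl2 : w^(2*n)/(6000*(w-1)^4) ≤ aP n w * cP n w - bP n w^2 := by
    have hkp : (1/(w-1))^4 ≤ (k:ℝ)^4 := pow_le_pow_left₀ (by positivity) hklo 4
    have hpow0 : (0:ℝ) < w^(2*n-4*k) := pow_pos hwpos _
    have h1 : (1/(w-1))^4 * w^(2*n-4*k) ≤ (k:ℝ)^4 * w^(2*n-4*k) :=
      mul_le_mul_of_nonneg_right hkp hpow0.le
    have h2 : w^(2*n)/3000 ≤ w^(2*n-4*k) := by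
      rw [div_le_iff₀ (by norm_num), hpow]
      exact mul_le_mul_of_nonneg_left hwk hpow0.le
    have h3 : (1/(w-1))^4 * (w^(2*n)/3000) ≤ (k:ℝ)^4 * w^(2*n-4*k) :=
      le_trans (mul_le_mul_of_nonneg_left h2 (by positivity)) h1
    have heq : w^(2*n)/(6000*(w-1)^4) = (1/(w-1))^4 * (w^(2*n)/3000) / 2 := by
      field_simp
      ring
    rw [heq]
    linarith
  have hDnn : 0 ≤ aP n w * cP n w - bP n w^2 := D_nonneg hwpos.le
  have hsqrtD : w^n/(78*(w-1)^2) ≤ Real.sqrt (aP n w * cP n w - bP n w^2) := by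
    rw [Real.le_sqrt (by positivity) hDnn]
    have e : (w^n/(78*(w-1)^2))^2 = w^(2*n)/(6084*(w-1)^4) := by
      have hp : (w^n)^2 = w^(2*n) := by rw [← pow_mul]; congr 1; omega
      rw [div_pow, hp]
      congr 1
      ring
    rw [e]
    calc w^(2*n)/(6084*(w-1)^4) ≤ w^(2*n)/(6000*(w-1)^4) := by
          apply div_le_div_of_nonneg_left (pow_nonneg hwpos.le _) (by positivity)
          nlinarith [pow_pos ht 4]
      _ ≤ aP n w * cP n w - bP n w^2 := hDl2
  have hApos : 0 < aP n w := aP_pos hwpos.le n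
  have hB : (n:ℝ)*aP n w/2 ≤ bP n w := by
    have := na_le_two_bP hw1'.le n
    linarith
  have hnum : ((n:ℝ)*aP n w/2) * (w^n/(78*(w-1)^2))
      ≤ bP n w * Real.sqrt (aP n w * cP n w - bP n w^2) :=
    mul_le_mul hB hsqrtD (by positivity) (bP_nonneg hwpos.le n)
  have hden : (0:ℝ) < 2*w*aP n w^2 := by positivity
  have hchain : ((n:ℝ)*aP n w/2) * (w^n/(78*(w-1)^2)) / (2*w*aP n w^2) ≤ F n w :=
    le_trans (div_le_div_of_nonneg_right hnum hden.le) (F_ge_form hwpos)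
  have hAle : aP n w * (w-1) ≤ w * w^n := by
    have h1 : aP n w * (w-1) = w^(n+1) - 1 := aP_mul_sub_one n
    have h2 : w^(n+1) = w * w^n := by rw [pow_succ]; ring
    rw [h1, h2]
    linarith
  have hfinal : (n:ℝ)/(1300*(w-1)) ≤ ((n:ℝ)*aP n w/2) * (w^n/(78*(w-1)^2)) / (2*w*aP n w^2) := by
    have heq : ((n:ℝ)*aP n w/2) * (w^n/(78*(w-1)^2)) / (2*w*aP n w^2)
        = (n:ℝ)*w^n/(312*w*(w-1)^2*aP n w) := by
      field_simp
      ring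
    rw [heq, div_le_div_iff₀ (by positivity) (by positivity)]
    have h312 : (0:ℝ) ≤ (n:ℝ)*(312*w*(w-1)) := by positivity
    have key2 := mul_le_mul_of_nonneg_left hAle h312
    have hnwn : (0:ℝ) ≤ (n:ℝ)*(w-1)*w^n := by positivity
    have hw4 : w*w ≤ 4 := by nlinarith
    have key3 : ((n:ℝ)*(312*w*(w-1)))*(w*w^n) ≤ (n:ℝ)*w^n*(1300*(w-1)) := by
      have h1 : ((n:ℝ)*(312*w*(w-1)))*(w*w^n) = 312*((w*w)*((n:ℝ)*(w-1)*w^n)) := by ring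
      have h2 : (n:ℝ)*w^n*(1300*(w-1)) = 1300*((n:ℝ)*(w-1)*w^n) := by ring
      rw [h1, h2]
      have h5 := mul_le_mul_of_nonneg_right hw4 hnwn
      linarith
    calc (n:ℝ)*(312*w*(w-1)^2*aP n w) = ((n:ℝ)*(312*w*(w-1)))*(aP n w*(w-1)) := by ring
      _ ≤ ((n:ℝ)*(312*w*(w-1)))*(w*w^n) := key2
      _ ≤ (n:ℝ)*w^n*(1300*(w-1)) := key3
  exact le_trans hfinal hchain

lemma F_contOn (n : ℕ) : ContinuousOn (F n) (Set.Ioi (0:ℝ)) := by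
  have ha : Continuous (fun w : ℝ => aP n w) := by
    unfold aP; exact continuous_finset_sum _ (fun j _ => continuous_pow j)
  have hb : Continuous (fun w : ℝ => bP n w) := by
    unfold bP; exact continuous_finset_sum _ (fun j _ => continuous_const.mul (continuous_pow j))
  have hc : Continuous (fun w : ℝ => cP n w) := by
    unfold cP; exact continuous_finset_sum _ (fun j _ => continuous_const.mul (continuous_pow j))
  apply ContinuousOn.div
  · apply Continuous.continuousOn
    exact Real.continuous_sqrt.comp (((ha.mul hc)).mul (((ha.mul hc)).sub (hb.pow 2)))
  · exact ((continuous_const.mul continuous_id').mul (ha.pow 2)).continuousOn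
  · intro w hw
    have hw0 : (0:ℝ) < w := hw
    have hA := aP_pos hw0.le n
    positivity

end NLogN

open NLogN

set_option maxHeartbeats 1000000 in
/-- When `m = n`, the expected number of zeros is of order `n log n`:
there are constants `c₂ > c₁ > 0` bounding `∫_0^∞ Fₙ(w) dw / (n log n)`
for all sufficiently large `n`. -/
theorem expectedZeros_order_nlogn :
    ∃ c₁ c₂ : ℝ, 0 < c₁ ∧ c₁ < c₂ ∧ ∃ N : ℕ, ∀ n : ℕ, N ≤ n →
      c₁ * (n * Real.log n) ≤ ∫ w in Set.Ioi (0 : ℝ), F n w ∧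
      (∫ w in Set.Ioi (0 : ℝ), F n w) ≤ c₂ * (n * Real.log n) := by
  refine ⟨1/2600, 5, by norm_num, by norm_num, 3^60, ?_⟩
  intro n hn
  have hn16 : 16 ≤ n := le_trans (by norm_num) hn
  have hn1 : 1 ≤ n := le_trans (by norm_num) hn
  have hnR16 : (16:ℝ) ≤ n := by exact_mod_cast hn16
  have hnR : (0:ℝ) < n := by linarith
  have hlog : (60:ℝ) ≤ Real.log n := by
    rw [Real.le_log_iff_exp_le hnR]
    have h1 : Real.exp 60 = Real.exp 1^60 := by
      rw [← Real.exp_nat_mul]; norm_num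
    have h2 : Real.exp 1^60 ≤ 2.7182818286^60 :=
      pow_le_pow_left₀ (Real.exp_pos 1).le Real.exp_one_lt_d9.le 60
    have h3 : (2.7182818286:ℝ)^60 ≤ 3^60 := pow_le_pow_left₀ (by norm_num) (by norm_num) 60
    have h4 : ((3:ℝ))^60 ≤ n := by
      have h5 : ((3^60 : ℕ):ℝ) ≤ (n:ℝ) := by exact_mod_cast hn
      push_cast at h5
      linarith
    calc Real.exp 60 = Real.exp 1^60 := h1
      _ ≤ 2.7182818286^60 := h2
      _ ≤ 3^60 := h3
      _ ≤ n := h4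
  have hlogpos : (0:ℝ) < Real.log n := by linarith
  have hinv_pos : (0:ℝ) < 1/(n:ℝ) := by positivity
  have hinv_le : 1/(n:ℝ) ≤ 1/16 := div_le_div_of_nonneg_left (by norm_num) (by norm_num) hnR16
  have h4inv : (4:ℝ)/n ≤ 1/4 := by
    rw [div_le_div_iff₀ hnR (by norm_num)]
    linarith
  have h4inv_pos : (0:ℝ) < 4/(n:ℝ) := by positivity
  -- measurability and integrability
  have hmeasIoc : AEStronglyMeasurable (F n) (volume.restrict (Set.Ioc (0:ℝ) 2)) :=
    ((F_contOn n).mono (fun x hx => hx.1)).aestronglyMeasurable measurableSet_Ioc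
  have hbdd : ∀ w ∈ Set.Ioc (0:ℝ) 2, F n w ≤ 40*(n:ℝ)^2 := by
    intro w hw
    obtain ⟨hw0, hw2⟩ := hw
    have hnsq1 : (1:ℝ) ≤ (n:ℝ)^2 := by nlinarith
    rcases le_or_gt w (1/2) with h|h
    · linarith [F_le_R0 (n := n) hw0 h]
    rcases le_or_gt w (1 - 1/(n:ℝ)) with h2|h2
    · have hb := F_le_R1 (n := n) hn1 h.le h2
      have h1w : 1/(n:ℝ) ≤ 1 - w := by linarith
      have hiw : 16/(1-w)^2 ≤ 16*(n:ℝ)^2 := by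
        rw [div_le_iff₀ (by nlinarith)]
        have hq : (1/(n:ℝ))^2 ≤ (1-w)^2 := pow_le_pow_left₀ (by positivity) h1w 2
        have hnz : (1/(n:ℝ))^2 * (n:ℝ)^2 = 1 := by field_simp
        nlinarith
      linarith
    rcases le_or_gt w (1 + 1/(n:ℝ)) with h3|h3
    · have := F_le_R2 (n := n) h.le
      nlinarith
    · have hb := F_le_R3 (n := n) hn1 h3.le hw2
      have h1w : 1/(n:ℝ) ≤ w - 1 := by linarith
      have hw1 : (0:ℝ) < w - 1 := by linarith
      have e1 : 32/(w-1)^2 ≤ 32*(n:ℝ)^2 := by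
        rw [div_le_iff₀ (by positivity)]
        have hq : (1/(n:ℝ))^2 ≤ (w-1)^2 := pow_le_pow_left₀ (by positivity) h1w 2
        have hnz : (1/(n:ℝ))^2 * (n:ℝ)^2 = 1 := by field_simp
        nlinarith
      have e2 : 4*(n:ℝ)/(w-1) ≤ 4*(n:ℝ)^2 := by
        rw [div_le_iff₀ hw1]
        have h6 := mul_le_mul_of_nonneg_left h1w hnR.le
        rw [mul_one_div, div_self hnR.ne'] at h6
        nlinarith
      nlinarith
  have hIntF02 : IntegrableOn (F n) (Set.Ioc (0:ℝ) 2) := by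
    apply Integrable.mono' (g := fun _ => 40*(n:ℝ)^2) _ hmeasIoc
    · rw [ae_restrict_iff' measurableSet_Ioc]
      filter_upwards with w
      intro hw
      rw [Real.norm_eq_abs, abs_of_nonneg (F_nonneg hw.1)]
      exact hbdd w hw
    · exact integrableOn_const measure_Ioc_lt_top.ne
  set g4 : ℝ → ℝ := fun w => 32*w^(-(2:ℝ)) + 4*(n:ℝ)*w^(-((3:ℝ)/2)) with hg4def
  have hIr1 : IntegrableOn (fun w : ℝ => w^(-(2:ℝ))) (Set.Ioi (2:ℝ)) :=
    integrableOn_Ioi_rpow_of_lt (by norm_num) (by norm_num)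
  have hIr2 : IntegrableOn (fun w : ℝ => w^(-((3:ℝ)/2))) (Set.Ioi (2:ℝ)) :=
    integrableOn_Ioi_rpow_of_lt (by norm_num) (by norm_num)
  have hIntg4 : IntegrableOn g4 (Set.Ioi (2:ℝ)) := (hIr1.const_mul 32).add (hIr2.const_mul (4*(n:ℝ)))
  have hg4eq : ∀ w:ℝ, 2 ≤ w → 32/w^2 + 4*(n:ℝ)/(w*Real.sqrt w) = g4 w := by
    intro w hw
    have hwp : (0:ℝ) < w := by linarith
    have e1 : w^(-(2:ℝ)) = (w^2)⁻¹ := by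
      rw [Real.rpow_neg hwp.le, ← Real.rpow_natCast w 2]
      norm_num
    have e2 : w^(-((3:ℝ)/2)) = (w*Real.sqrt w)⁻¹ := by
      rw [Real.rpow_neg hwp.le]
      congr 1
      rw [show ((3:ℝ)/2) = 1 + 1/2 by norm_num, Real.rpow_add hwp, Real.rpow_one,
        ← Real.sqrt_eq_rpow]
    show _ = 32*w^(-(2:ℝ)) + 4*(n:ℝ)*w^(-((3:ℝ)/2))
    rw [e1, e2, div_eq_mul_inv, div_eq_mul_inv]
  have hmeasIoi2 : AEStronglyMeasurable (F n) (volume.restrict (Set.Ioi (2:ℝ))) :=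
    ((F_contOn n).mono (fun x hx => lt_trans (by norm_num) hx)).aestronglyMeasurable
      measurableSet_Ioi
  have hIntF2 : IntegrableOn (F n) (Set.Ioi (2:ℝ)) := by
    apply Integrable.mono' hIntg4 hmeasIoi2
    rw [ae_restrict_iff' measurableSet_Ioi]
    filter_upwards with w
    intro hw
    have hw2 : (2:ℝ) < w := hw
    rw [Real.norm_eq_abs, abs_of_nonneg (F_nonneg (by linarith))]
    rw [← hg4eq w hw2.le]
    exact F_le_R4 hw2.le
  have hIntF : IntegrableOn (F n) (Set.Ioi (0:ℝ)) := by
    rw [← Set.Ioc_union_Ioi_eq_Ioi (by norm_num : (0:ℝ) ≤ 2)]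
    exact hIntF02.union hIntF2
  have hae : 0 ≤ᵐ[volume.restrict (Set.Ioi (0:ℝ))] F n := by
    filter_upwards [ae_restrict_mem measurableSet_Ioi] with w hw
    exact F_nonneg hw
  have hII : ∀ a b : ℝ, 0 ≤ a → a ≤ b → b ≤ 2 → IntervalIntegrable (F n) volume a b := by
    intro a b ha hab hb
    rw [intervalIntegrable_iff]
    apply hIntF02.mono_set
    rw [Set.uIoc_of_le hab]
    exact Set.Ioc_subset_Ioc ha hb
  constructor
  · -- LOWER BOUND
    have hle42 : 1 + 4/(n:ℝ) ≤ 2 := by linarith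
    have hsub : Set.Ioc (1+4/(n:ℝ)) 2 ⊆ Set.Ioi (0:ℝ) := by
      intro x hx
      have h1 : 1 + 4/(n:ℝ) < x := hx.1
      simp only [Set.mem_Ioi]
      linarith
    have hstep1 : (∫ w in Set.Ioc (1+4/(n:ℝ)) 2, F n w) ≤ ∫ w in Set.Ioi (0:ℝ), F n w :=
      setIntegral_mono_set hIntF hae (HasSubset.Subset.eventuallyLE hsub)
    have hioc : (∫ w in Set.Ioc (1+4/(n:ℝ)) 2, F n w) = ∫ w in (1+4/(n:ℝ))..2, F n w :=
      (intervalIntegral.integral_of_le hle42).symm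
    have hIIF : IntervalIntegrable (F n) volume (1+4/(n:ℝ)) 2 :=
      hII _ _ (by linarith) hle42 le_rfl
    have hgcont : ContinuousOn (fun w => (n:ℝ)/(1300*(w-1))) (Set.uIcc (1+4/(n:ℝ)) 2) := by
      apply ContinuousOn.div continuousOn_const
      · exact (continuous_const.mul (continuous_id'.sub continuous_const)).continuousOn
      · intro x hx
        rw [Set.uIcc_of_le hle42] at hx
        have h1 : 1 + 4/(n:ℝ) ≤ x := hx.1
        have h2 : (0:ℝ) < x - 1 := by linarith
        positivity
    have hIIg : IntervalIntegrable (fun w => (n:ℝ)/(1300*(w-1))) volume (1+4/(n:ℝ)) 2 :=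
      hgcont.intervalIntegrable
    have hmono : (∫ w in (1+4/(n:ℝ))..2, (n:ℝ)/(1300*(w-1))) ≤ ∫ w in (1+4/(n:ℝ))..2, F n w := by
      apply intervalIntegral.integral_mono_on hle42 hIIg hIIF
      intro x hx
      exact F_ge_R hn16 hx.1 hx.2
    have heval : (∫ w in (1+4/(n:ℝ))..2, (n:ℝ)/(1300*(w-1)))
        = (n:ℝ)/1300 * (Real.log (2-1) - Real.log (1+4/(n:ℝ)-1)) := by
      have hderiv : ∀ x ∈ Set.uIcc (1+4/(n:ℝ)) 2,
          HasDerivAt (fun y => (n:ℝ)/1300 * Real.log (y-1)) ((n:ℝ)/(1300*(x-1))) x := by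
        intro x hx
        rw [Set.uIcc_of_le hle42] at hx
        have hx1 : (0:ℝ) < x - 1 := by linarith [hx.1]
        have h1 : HasDerivAt (fun y : ℝ => y - 1) 1 x := (hasDerivAt_id x).sub_const 1
        have h2 := (h1.log hx1.ne').const_mul ((n:ℝ)/1300)
        exact h2.congr_deriv (by rw [mul_one_div, div_div])
      rw [intervalIntegral.integral_eq_sub_of_hasDerivAt hderiv hIIg]
      ring
    have hval : (n:ℝ)/1300 * (Real.log (2-1) - Real.log (1+4/(n:ℝ)-1))
        = (n:ℝ)/1300 * (Real.log n - Real.log 4) := by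
      rw [show (2:ℝ)-1 = 1 by norm_num, show 1+4/(n:ℝ)-1 = 4/(n:ℝ) by ring,
        Real.log_one, Real.log_div (by norm_num) hnR.ne']
      ring
    have hlog4 : Real.log 4 ≤ 3 := by
      have := Real.log_le_sub_one_of_pos (by norm_num : (0:ℝ) < 4)
      linarith
    have hhalf : (1/2) * Real.log n ≤ Real.log n - Real.log 4 := by linarith
    calc (1/2600) * ((n:ℝ) * Real.log n) = (n:ℝ)/1300 * ((1/2) * Real.log n) := by ring
      _ ≤ (n:ℝ)/1300 * (Real.log n - Real.log 4) :=
          mul_le_mul_of_nonneg_left hhalf (by positivity)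
      _ = ∫ w in (1+4/(n:ℝ))..2, (n:ℝ)/(1300*(w-1)) := by rw [heval, hval]
      _ ≤ ∫ w in (1+4/(n:ℝ))..2, F n w := hmono
      _ = ∫ w in Set.Ioc (1+4/(n:ℝ)) 2, F n w := hioc.symm
      _ ≤ ∫ w in Set.Ioi (0:ℝ), F n w := hstep1
  · -- UPPER BOUND
    have hsplit : (∫ w in Set.Ioi (0:ℝ), F n w)
        = (∫ w in Set.Ioc (0:ℝ) 2, F n w) + ∫ w in Set.Ioi (2:ℝ), F n w := by
      rw [← Set.Ioc_union_Ioi_eq_Ioi (by norm_num : (0:ℝ) ≤ 2)]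
      rw [setIntegral_union (Set.Ioc_disjoint_Ioi le_rfl) measurableSet_Ioi hIntF02 hIntF2]
    -- tail estimate
    have htail : (∫ w in Set.Ioi (2:ℝ), F n w) ≤ 16 + 6*(n:ℝ) := by
      have h1 : (∫ w in Set.Ioi (2:ℝ), F n w) ≤ ∫ w in Set.Ioi (2:ℝ), g4 w := by
        apply setIntegral_mono_on hIntF2 hIntg4 measurableSet_Ioi
        intro w hw
        have hw2 : (2:ℝ) < w := hw
        rw [← hg4eq w hw2.le]
        exact F_le_R4 hw2.le
      have h2 : (∫ w in Set.Ioi (2:ℝ), g4 w)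
          = 32*(∫ w in Set.Ioi (2:ℝ), w^(-(2:ℝ))) + (4*(n:ℝ))*(∫ w in Set.Ioi (2:ℝ), w^(-((3:ℝ)/2))) := by
        rw [hg4def]
        rw [integral_add (hIr1.const_mul 32) (hIr2.const_mul (4*(n:ℝ))),
          integral_const_mul, integral_const_mul]
      have h3 : (∫ w in Set.Ioi (2:ℝ), w^(-(2:ℝ))) = -(2:ℝ)^(-(2:ℝ)+1)/(-(2:ℝ)+1) :=
        integral_Ioi_rpow_of_lt (by norm_num) (by norm_num)
      have h4 : (∫ w in Set.Ioi (2:ℝ), w^(-((3:ℝ)/2))) = -(2:ℝ)^(-((3:ℝ)/2)+1)/(-((3:ℝ)/2)+1) :=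
        integral_Ioi_rpow_of_lt (by norm_num) (by norm_num)
      have h5 : -(2:ℝ)^(-(2:ℝ)+1)/(-(2:ℝ)+1) = 1/2 := by
        rw [show (-(2:ℝ)+1) = -1 by norm_num]
        rw [Real.rpow_neg_one]
        norm_num
      have h6 : -(2:ℝ)^(-((3:ℝ)/2)+1)/(-((3:ℝ)/2)+1) ≤ 3/2 := by
        rw [show (-((3:ℝ)/2)+1) = -(1/2:ℝ) by norm_num]
        have e2 : (2:ℝ)^(-(1/2:ℝ)) = (Real.sqrt 2)⁻¹ := by
          rw [Real.rpow_neg (by norm_num)]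
          congr 1
          rw [← Real.sqrt_eq_rpow]
        rw [e2]
        have hs2 : (1.4:ℝ) ≤ Real.sqrt 2 := by
          rw [show (2:ℝ) = 1.4^2 + 0.04 by norm_num]
          have := Real.sqrt_le_sqrt (show (1.4:ℝ)^2 ≤ 1.4^2 + 0.04 by norm_num)
          rwa [Real.sqrt_sq (by norm_num : (0:ℝ) ≤ 1.4)] at this
        have hs2' : (0:ℝ) < Real.sqrt 2 := by linarith
        have he3 : -((Real.sqrt 2)⁻¹)/(-(1/2:ℝ)) = 2/Real.sqrt 2 := by
          field_simp
        rw [he3, div_le_iff₀ hs2']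
        nlinarith
      have hfin : 32*(∫ w in Set.Ioi (2:ℝ), w^(-(2:ℝ))) + (4*(n:ℝ))*(∫ w in Set.Ioi (2:ℝ), w^(-((3:ℝ)/2)))
          ≤ 16 + 6*(n:ℝ) := by
        rw [h3, h4, h5]
        nlinarith [h6, hnR.le]
      linarith [h1, h2 ▸ hfin]
    -- interval pieces on (0,2]
    have e2' : (1:ℝ)/2 ≤ 1 - 1/(n:ℝ) := by linarith
    have e3' : 1 - 1/(n:ℝ) ≤ 1 + 1/(n:ℝ) := by linarith
    have e4' : 1 + 1/(n:ℝ) ≤ 2 := by linarith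
    have e0' : (0:ℝ) ≤ 1 - 1/(n:ℝ) := by linarith
    have hIocInt : (∫ w in Set.Ioc (0:ℝ) 2, F n w) = ∫ w in (0:ℝ)..2, F n w :=
      (intervalIntegral.integral_of_le (by norm_num)).symm
    have hadd1 : (∫ w in (0:ℝ)..(1/2:ℝ), F n w) + (∫ w in (1/2:ℝ)..2, F n w)
        = ∫ w in (0:ℝ)..2, F n w :=
      intervalIntegral.integral_add_adjacent_intervals
        (hII 0 (1/2) le_rfl (by norm_num) (by norm_num))
        (hII (1/2) 2 (by norm_num) (by norm_num) le_rfl)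
    have hadd2 : (∫ w in (1/2:ℝ)..(1-1/(n:ℝ)), F n w) + (∫ w in (1-1/(n:ℝ))..2, F n w)
        = ∫ w in (1/2:ℝ)..2, F n w :=
      intervalIntegral.integral_add_adjacent_intervals
        (hII (1/2) (1-1/(n:ℝ)) (by norm_num) e2' (by linarith))
        (hII (1-1/(n:ℝ)) 2 e0' (by linarith) le_rfl)
    have hadd3 : (∫ w in (1-1/(n:ℝ))..(1+1/(n:ℝ)), F n w) + (∫ w in (1+1/(n:ℝ))..2, F n w)
        = ∫ w in (1-1/(n:ℝ))..2, F n w :=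
      intervalIntegral.integral_add_adjacent_intervals
        (hII (1-1/(n:ℝ)) (1+1/(n:ℝ)) e0' e3' e4')
        (hII (1+1/(n:ℝ)) 2 (by linarith) e4' le_rfl)
    -- piece 1
    have hp1 : (∫ w in (0:ℝ)..(1/2:ℝ), F n w) ≤ 16 := by
      have hb : ∀ x ∈ Set.Icc (0:ℝ) (1/2:ℝ), F n x ≤ 32 := by
        intro x hx
        rcases eq_or_lt_of_le hx.1 with h|h
        · rw [← h]
          simp [F]
        · exact F_le_R0 h hx.2
      calc (∫ w in (0:ℝ)..(1/2:ℝ), F n w) ≤ ∫ _ in (0:ℝ)..(1/2:ℝ), (32:ℝ) :=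
            intervalIntegral.integral_mono_on (by norm_num : (0:ℝ) ≤ 1/2)
              (hII 0 (1/2) le_rfl (by norm_num) (by norm_num)) intervalIntegrable_const hb
        _ = 16 := by
            rw [intervalIntegral.integral_const, smul_eq_mul]
            norm_num
    -- piece 2
    have hp2 : (∫ w in (1/2:ℝ)..(1-1/(n:ℝ)), F n w) ≤ 16*(n:ℝ) := by
      have hcont2 : ContinuousOn (fun w : ℝ => 16/(1-w)^2) (Set.uIcc (1/2:ℝ) (1-1/(n:ℝ))) := by
        apply ContinuousOn.div continuousOn_const
        · exact ((continuous_const.sub continuous_id').pow 2).continuousOn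
        · intro x hx
          rw [Set.uIcc_of_le e2'] at hx
          have h1 : x ≤ 1 - 1/(n:ℝ) := hx.2
          have h2 : (0:ℝ) < 1 - x := by linarith
          positivity
      have hIIg2 : IntervalIntegrable (fun w : ℝ => 16/(1-w)^2) volume (1/2:ℝ) (1-1/(n:ℝ)) :=
        hcont2.intervalIntegrable
      have hmono2 := intervalIntegral.integral_mono_on e2'
        (hII (1/2) (1-1/(n:ℝ)) (by norm_num) e2' (by linarith)) hIIg2
        (fun x hx => F_le_R1 hn1 hx.1 hx.2)
      have heval2 : (∫ w in (1/2:ℝ)..(1-1/(n:ℝ)), 16/(1-w)^2)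
          = 16*(1-(1-1/(n:ℝ)))⁻¹ - 16*(1-(1/2:ℝ))⁻¹ := by
        have hderiv : ∀ x ∈ Set.uIcc (1/2:ℝ) (1-1/(n:ℝ)),
            HasDerivAt (fun y : ℝ => 16*(1-y)⁻¹) (16/(1-x)^2) x := by
          intro x hx
          rw [Set.uIcc_of_le e2'] at hx
          have h2 : (0:ℝ) < 1 - x := by linarith [hx.2]
          have h1 : HasDerivAt (fun y : ℝ => 1 - y) (-1) x := (hasDerivAt_id x).const_sub 1
          have h3 := (h1.inv h2.ne').const_mul (16:ℝ)
          exact h3.congr_deriv (by ring)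
        rw [intervalIntegral.integral_eq_sub_of_hasDerivAt hderiv hIIg2]
      have hsimp : 16*(1-(1-1/(n:ℝ)))⁻¹ - 16*(1-(1/2:ℝ))⁻¹ = 16*(n:ℝ) - 32 := by
        rw [show (1:ℝ)-(1-1/(n:ℝ)) = 1/(n:ℝ) by ring, one_div, inv_inv]
        norm_num
      rw [heval2, hsimp] at hmono2
      linarith
    -- piece 3
    have hp3 : (∫ w in (1-1/(n:ℝ))..(1+1/(n:ℝ)), F n w) ≤ 4*(n:ℝ) := by
      have hmono3 := intervalIntegral.integral_mono_on e3'
        (hII (1-1/(n:ℝ)) (1+1/(n:ℝ)) e0' e3' e4') intervalIntegrable_const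
        (fun x hx => F_le_R2 (n := n) (by linarith [hx.1] : 1/2 ≤ x))
      have heval3 : (∫ _ in (1-1/(n:ℝ))..(1+1/(n:ℝ)), (2*(n:ℝ)^2 : ℝ))
          = (2/(n:ℝ)) * (2*(n:ℝ)^2) := by
        rw [intervalIntegral.integral_const, smul_eq_mul]
        congr 1
        ring
      have hsimp : (2/(n:ℝ)) * (2*(n:ℝ)^2) = 4*(n:ℝ) := by
        field_simp
        ring
      rw [heval3, hsimp] at hmono3
      linarith
    -- piece 4
    have hp4 : (∫ w in (1+1/(n:ℝ))..2, F n w) ≤ 32*(n:ℝ) + 4*(n:ℝ)*Real.log n := by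
      have hcont4 : ContinuousOn (fun w : ℝ => 32/(w-1)^2 + 4*(n:ℝ)/(w-1))
          (Set.uIcc (1+1/(n:ℝ)) 2) := by
        have hne : ∀ x ∈ Set.uIcc (1+1/(n:ℝ)) 2, (0:ℝ) < x - 1 := by
          intro x hx
          rw [Set.uIcc_of_le e4'] at hx
          linarith [hx.1]
        apply ContinuousOn.add
        · apply ContinuousOn.div continuousOn_const
            (((continuous_id'.sub continuous_const).pow 2).continuousOn)
          intro x hx
          have := hne x hx
          exact pow_ne_zero _ this.ne'
        · apply ContinuousOn.div continuousOn_const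
            ((continuous_id'.sub continuous_const).continuousOn)
          intro x hx
          have := hne x hx
          positivity
      have hIIg4 : IntervalIntegrable (fun w : ℝ => 32/(w-1)^2 + 4*(n:ℝ)/(w-1))
          volume (1+1/(n:ℝ)) 2 := hcont4.intervalIntegrable
      have hmono4 := intervalIntegral.integral_mono_on e4'
        (hII (1+1/(n:ℝ)) 2 (by linarith) e4' le_rfl) hIIg4
        (fun x hx => F_le_R3 hn1 hx.1 hx.2)
      have heval4 : (∫ w in (1+1/(n:ℝ))..2, (32/(w-1)^2 + 4*(n:ℝ)/(w-1)))
          = (-32*((2:ℝ)-1)⁻¹ + 4*(n:ℝ)*Real.log ((2:ℝ)-1))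
            - (-32*((1+1/(n:ℝ))-1)⁻¹ + 4*(n:ℝ)*Real.log ((1+1/(n:ℝ))-1)) := by
        have hderiv : ∀ x ∈ Set.uIcc (1+1/(n:ℝ)) 2,
            HasDerivAt (fun y : ℝ => -32*(y-1)⁻¹ + 4*(n:ℝ)*Real.log (y-1))
              (32/(x-1)^2 + 4*(n:ℝ)/(x-1)) x := by
          intro x hx
          rw [Set.uIcc_of_le e4'] at hx
          have h2 : (0:ℝ) < x - 1 := by linarith [hx.1]
          have h1 : HasDerivAt (fun y : ℝ => y - 1) 1 x := (hasDerivAt_id x).sub_const 1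
          have h3 := (h1.inv h2.ne').const_mul (-32:ℝ)
          have h4 := (h1.log h2.ne').const_mul (4*(n:ℝ))
          have h5 := h3.add h4
          exact h5.congr_deriv (by ring)
        rw [intervalIntegral.integral_eq_sub_of_hasDerivAt hderiv hIIg4]
      have hsimp4 : (-32*((2:ℝ)-1)⁻¹ + 4*(n:ℝ)*Real.log ((2:ℝ)-1))
            - (-32*((1+1/(n:ℝ))-1)⁻¹ + 4*(n:ℝ)*Real.log ((1+1/(n:ℝ))-1))
          = -32 + 32*(n:ℝ) + 4*(n:ℝ)*Real.log n := by
        rw [show ((2:ℝ)-1) = 1 by norm_num, show (1+1/(n:ℝ))-1 = 1/(n:ℝ) by ring,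
          Real.log_one, one_div, Real.log_inv, inv_inv]
        ring
      have : (∫ w in (1+1/(n:ℝ))..2, F n w)
          ≤ -32 + 32*(n:ℝ) + 4*(n:ℝ)*Real.log n := by
        rw [← hsimp4, ← heval4]
        exact hmono4
      linarith
    -- combine
    have hIoc : (∫ w in Set.Ioc (0:ℝ) 2, F n w)
        ≤ 16 + 16*(n:ℝ) + 4*(n:ℝ) + (32*(n:ℝ) + 4*(n:ℝ)*Real.log n) := by
      rw [hIocInt, ← hadd1, ← hadd2, ← hadd3]
      linarith [hp1, hp2, hp3, hp4]
    have hsum : (∫ w in Set.Ioi (0:ℝ), F n w)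
        ≤ 4*(n:ℝ)*Real.log n + 58*(n:ℝ) + 32 := by
      rw [hsplit]
      linarith [hIoc, htail]
    have hfinal : 4*(n:ℝ)*Real.log n + 58*(n:ℝ) + 32 ≤ 5 * ((n:ℝ) * Real.log n) := by
      have h60 : 60*(n:ℝ) ≤ (n:ℝ)*Real.log n := by
        have := mul_le_mul_of_nonneg_left hlog hnR.le
        linarith
      linarith
    linarith
end

section
/- Let n ≥ 1 be a natural number. For every real w > 0 with w ≠ 1, with a_n(w) = Σ_{j=0}^n w^j, b_n(w) = Σ_{j=1}^n j w^j, c_n(w) = Σ_{j=1}^n j² w^j, one has (a_n(w) c_n(w) − b_n(w)²)/(w a_n(w)²) = (1/(w−1)²) · (1 − (n+1)² w^n / a_n(w)²). -/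
open Finset

lemma aP_closed (k : ℕ) (w : ℝ) : (w - 1) * aP k w = w ^ (k + 1) - 1 := by
  induction k with
  | zero => simp [aP]
  | succ m ih =>
      rw [aP, sum_range_succ, ← aP]
      linear_combination ih

lemma bP_closed (k : ℕ) (w : ℝ) :
    (w - 1) ^ 2 * bP k w = (k : ℝ) * w ^ (k + 2) - ((k : ℝ) + 1) * w ^ (k + 1) + w := by
  induction k with
  | zero => simp [bP]
  | succ m ih =>
      rw [bP, sum_range_succ, ← bP]
      push_cast
      linear_combination ih

lemma cP_closed (k : ℕ) (w : ℝ) :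
    (w - 1) ^ 3 * cP k w = (k : ℝ) ^ 2 * w ^ (k + 3)
      - (2 * (k : ℝ) ^ 2 + 2 * (k : ℝ) - 1) * w ^ (k + 2)
      + ((k : ℝ) + 1) ^ 2 * w ^ (k + 1) - w ^ 2 - w := by
  induction k with
  | zero => simp [cP]
  | succ m ih =>
      rw [cP, sum_range_succ, ← cP]
      push_cast
      linear_combination ih

/-- For `w > 0`, `w ≠ 1`:
`(aₙcₙ − bₙ²)/(w aₙ²) = (1/(w−1)²)(1 − (n+1)² wⁿ/aₙ²)`. -/
theorem key_identity (n : ℕ) (hn : 1 ≤ n) (w : ℝ) (hw : 0 < w) (hw1 : w ≠ 1) :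
    (aP n w * cP n w - bP n w ^ 2) / (w * aP n w ^ 2) =
      (1 / (w - 1) ^ 2) * (1 - ((n : ℝ) + 1) ^ 2 * w ^ n / aP n w ^ 2) := by
  have hw0 : w ≠ 0 := ne_of_gt hw
  have hwm1 : w - 1 ≠ 0 := sub_ne_zero.mpr hw1
  have hapos : 0 < aP n w := by
    have : 0 < ∑ j ∈ range (n + 1), w ^ j :=
      Finset.sum_pos (fun j _ => pow_pos hw j) (by simp)
    simpa [aP] using this
  have ha0 : aP n w ≠ 0 := ne_of_gt hapos
  have ha := aP_closed n w
  have hb := bP_closed n w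
  have hc := cP_closed n w
  have key : (w - 1) ^ 4 * (aP n w * cP n w - bP n w ^ 2) =
      (w - 1) ^ 2 * (w * aP n w ^ 2 - ((n : ℝ) + 1) ^ 2 * w ^ (n + 1)) := by
    have h1 : ((w - 1) * aP n w) * ((w - 1) ^ 3 * cP n w) - ((w - 1) ^ 2 * bP n w) ^ 2 =
        (w ^ (n + 1) - 1) * ((n : ℝ) ^ 2 * w ^ 2 * w ^ (n + 1)
          - (2 * (n : ℝ) ^ 2 + 2 * (n : ℝ) - 1) * w * w ^ (n + 1)
          + ((n : ℝ) + 1) ^ 2 * w ^ (n + 1) - w ^ 2 - w)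
        - ((n : ℝ) * w * w ^ (n + 1) - ((n : ℝ) + 1) * w ^ (n + 1) + w) ^ 2 := by
      rw [ha, hb, hc]; ring
    have h2 : ((w - 1) * aP n w) ^ 2 = (w ^ (n + 1) - 1) ^ 2 := by rw [ha]
    linear_combination h1 - w * h2
  have key2 : (w - 1) ^ 2 * (aP n w * cP n w - bP n w ^ 2) =
      w * aP n w ^ 2 - ((n : ℝ) + 1) ^ 2 * w ^ (n + 1) := by
    have h := key
    have h2 : (w - 1) ^ 2 ≠ 0 := pow_ne_zero 2 hwm1
    apply mul_left_cancel₀ h2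
    linear_combination h
  field_simp
  linear_combination key2
end

section
/- For every natural number n ≥ 1, the function w ↦ (n+1)² w^n / a_n(w)², where a_n(w) = Σ_{k=0}^n w^k, is strictly decreasing on the interval (1, ∞). -/
open Finset

lemma aP_pos (k : ℕ) {w : ℝ} (hw : 0 < w) : 0 < aP k w :=
  Finset.sum_pos (fun i _ => pow_pos hw i) ⟨0, by simp⟩

lemma key_le (m : ℕ) {x y : ℝ} (hx : 1 < x) (hxy : x < y) :
    x ^ m + (x ^ m)⁻¹ ≤ y ^ m + (y ^ m)⁻¹ := by
  have ha : 1 ≤ x ^ m := one_le_pow₀ hx.le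
  have hb : x ^ m ≤ y ^ m := pow_le_pow_left₀ (by linarith) hxy.le m
  have ha0 : (0:ℝ) < x ^ m := by linarith
  have hb0 : (0:ℝ) < y ^ m := by linarith
  have hai : x ^ m * (x ^ m)⁻¹ = 1 := mul_inv_cancel₀ (ne_of_gt ha0)
  have hbi : y ^ m * (y ^ m)⁻¹ = 1 := mul_inv_cancel₀ (ne_of_gt hb0)
  have hab : 1 ≤ x ^ m * y ^ m := by nlinarith
  have h1 : (y ^ m - x ^ m) * (x ^ m * y ^ m - 1) ≥ 0 :=
    mul_nonneg (sub_nonneg.2 hb) (sub_nonneg.2 hab)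
  nlinarith [mul_pos ha0 hb0]

lemma key_lt (m : ℕ) (hm : m ≠ 0) {x y : ℝ} (hx : 1 < x) (hxy : x < y) :
    x ^ m + (x ^ m)⁻¹ < y ^ m + (y ^ m)⁻¹ := by
  have ha : 1 < x ^ m := one_lt_pow₀ hx hm
  have hb : x ^ m < y ^ m := pow_lt_pow_left₀ hxy (by linarith) hm
  have ha0 : (0:ℝ) < x ^ m := by linarith
  have hb0 : (0:ℝ) < y ^ m := by linarith
  have hai : x ^ m * (x ^ m)⁻¹ = 1 := mul_inv_cancel₀ (ne_of_gt ha0)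
  have hbi : y ^ m * (y ^ m)⁻¹ = 1 := mul_inv_cancel₀ (ne_of_gt hb0)
  have hab : 1 < x ^ m * y ^ m := by nlinarith
  have h1 : (y ^ m - x ^ m) * (x ^ m * y ^ m - 1) > 0 :=
    mul_pos (sub_pos.2 hb) (sub_pos.2 hab)
  nlinarith [mul_pos ha0 hb0]

/-- symmetric pair identity -/
lemma pair_eq {w : ℝ} (hw : w ≠ 0) (j k : ℕ) :
    w ^ j * (w⁻¹) ^ k + w ^ k * (w⁻¹) ^ j
      = w ^ (max j k - min j k) + (w ^ (max j k - min j k))⁻¹ := by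
  rcases le_total j k with h | h
  · obtain ⟨d, rfl⟩ := Nat.exists_eq_add_of_le h
    simp only [max_eq_right (Nat.le_add_right j d), min_eq_left (Nat.le_add_right j d),
      Nat.add_sub_cancel_left]
    field_simp
    have ej : w ^ j * w⁻¹ ^ j = 1 := by rw [← mul_pow, mul_inv_cancel₀ hw, one_pow]
    have ed : w ^ d * w⁻¹ ^ d = 1 := by rw [← mul_pow, mul_inv_cancel₀ hw, one_pow]
    linear_combination (w ^ d * w⁻¹ ^ d + w ^ (d * 2)) * ej + ed
  · obtain ⟨d, rfl⟩ := Nat.exists_eq_add_of_le h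
    simp only [max_eq_left (Nat.le_add_right k d), min_eq_right (Nat.le_add_right k d),
      Nat.add_sub_cancel_left]
    field_simp
    have ej : w ^ k * w⁻¹ ^ k = 1 := by rw [← mul_pow, mul_inv_cancel₀ hw, one_pow]
    have ed : w ^ d * w⁻¹ ^ d = 1 := by rw [← mul_pow, mul_inv_cancel₀ hw, one_pow]
    linear_combination (w ^ d * w⁻¹ ^ d + w ^ (d * 2)) * ej + ed

/-- `w^n * aP n w⁻¹ = aP n w` -/
lemma aP_inv (n : ℕ) {w : ℝ} (hw : 0 < w) : w ^ n * aP n w⁻¹ = aP n w := by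
  unfold aP
  rw [Finset.mul_sum, ← Finset.sum_range_reflect (fun j => w ^ j) (n + 1)]
  refine Finset.sum_congr rfl fun k hk => ?_
  have hk' : k ≤ n := Nat.lt_succ_iff.mp (Finset.mem_range.mp hk)
  have h1 : n + 1 - 1 - k = n - k := by omega
  rw [h1, inv_pow, mul_inv_eq_iff_eq_mul₀ (by positivity), ← pow_add,
    Nat.sub_add_cancel hk']

lemma double_sum_eq (n : ℕ) {w : ℝ} (hw : w ≠ 0) :
    2 * (aP n w * aP n w⁻¹)
      = ∑ j ∈ range (n + 1), ∑ k ∈ range (n + 1),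
          (w ^ (max j k - min j k) + (w ^ (max j k - min j k))⁻¹) := by
  unfold aP
  rw [Finset.sum_mul_sum, two_mul]
  have h2 : ∑ j ∈ range (n + 1), ∑ k ∈ range (n + 1), w ^ j * (w⁻¹) ^ k
      = ∑ j ∈ range (n + 1), ∑ k ∈ range (n + 1), w ^ k * (w⁻¹) ^ j :=
    Finset.sum_comm
  nth_rewrite 2 [h2]
  rw [← Finset.sum_add_distrib]
  refine Finset.sum_congr rfl fun j _ => ?_
  rw [← Finset.sum_add_distrib]
  exact Finset.sum_congr rfl fun k _ => pair_eq hw j k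

/-- For `n ≥ 1`, the function `w ↦ (n+1)² wⁿ/aₙ(w)²` is strictly decreasing
on `(1, ∞)`. -/
theorem strictAnti_ratio (n : ℕ) (hn : 1 ≤ n) :
    StrictAntiOn (fun w : ℝ => ((n : ℝ) + 1) ^ 2 * w ^ n / aP n w ^ 2)
      (Set.Ioi (1 : ℝ)) := by
  intro x hx y hy hxy
  have hx1 : (1:ℝ) < x := hx
  have hy1 : (1:ℝ) < y := hy
  have hx0 : (0:ℝ) < x := by linarith
  have hy0 : (0:ℝ) < y := by linarith
  -- rewrite the function as C / H w with H w = aP n w * aP n w⁻¹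
  have hf : ∀ w : ℝ, 1 < w →
      ((n : ℝ) + 1) ^ 2 * w ^ n / aP n w ^ 2
        = ((n : ℝ) + 1) ^ 2 / (aP n w * aP n w⁻¹) := by
    intro w hw
    have hw0 : 0 < w := by linarith
    have hA := aP_pos n hw0
    have h := aP_inv n hw0
    have hinv : aP n w⁻¹ = aP n w / w ^ n := by
      rw [eq_div_iff (pow_pos hw0 n).ne']
      linarith [h]
    rw [hinv]
    field_simp
  -- H x < H y
  have hHlt : aP n x * aP n x⁻¹ < aP n y * aP n y⁻¹ := by
    have h2 : 2 * (aP n x * aP n x⁻¹) < 2 * (aP n y * aP n y⁻¹) := by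
      rw [double_sum_eq n hx0.ne', double_sum_eq n hy0.ne']
      refine Finset.sum_lt_sum (fun j _ => Finset.sum_le_sum
        (fun k _ => key_le _ hx1 hxy)) ⟨1, Finset.mem_range.mpr (by omega), ?_⟩
      refine Finset.sum_lt_sum (fun k _ => key_le _ hx1 hxy)
        ⟨0, Finset.mem_range.mpr (by omega), ?_⟩
      exact key_lt _ (by simp) hx1 hxy
    linarith
  have hHx : 0 < aP n x * aP n x⁻¹ :=
    mul_pos (aP_pos n hx0) (aP_pos n (inv_pos.mpr hx0))
  simp only
  rw [hf x hx1, hf y hy1]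
  exact div_lt_div_of_pos_left (by positivity) hHx hHlt
end

section
/- Let n ≥ 1 be a natural number and let a_n(w) = Σ_{j=0}^n w^j and c_n(w) = Σ_{j=1}^n j² w^j. Then c_n(w) ≤ n² a_n(w) for all real w > 0, and c_n(w) ≥ (1/16) n² a_n(w) for all real w > 1. -/
open Finset

/-- For `n ≥ 1`: `cₙ(w) ≤ n² aₙ(w)` for all `w > 0`, and
`cₙ(w) ≥ n² aₙ(w)/16` for all `w > 1`. -/
theorem c_div_a_bounds (n : ℕ) (hn : 1 ≤ n) :
    (∀ w : ℝ, 0 < w → cP n w ≤ (n : ℝ) ^ 2 * aP n w) ∧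
      (∀ w : ℝ, 1 < w → (1 / 16) * ((n : ℝ) ^ 2 * aP n w) ≤ cP n w) := by
  constructor
  · intro w hw
    rw [cP, aP, Finset.mul_sum]
    apply Finset.sum_le_sum
    intro j hj
    have hj' : (j : ℝ) ≤ (n : ℝ) := by
      exact_mod_cast Nat.lt_succ_iff.mp (Finset.mem_range.mp hj)
    have hj0 : (0:ℝ) ≤ (j:ℝ) := Nat.cast_nonneg j
    have h2 : (j:ℝ)^2 ≤ (n:ℝ)^2 := pow_le_pow_left₀ hj0 hj' 2
    exact mul_le_mul_of_nonneg_right h2 (le_of_lt (pow_pos hw j))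
  · intro w hw
    have hw0 : (0:ℝ) < w := lt_trans one_pos hw
    have hw1 : (1:ℝ) ≤ w := le_of_lt hw
    set m := (n + 1) / 2 with hm
    have h2m : n ≤ 2 * m := by omega
    have h2m' : 2 * m ≤ n + 1 := by omega
    have hmn : m ≤ n + 1 := by omega
    -- split aP
    have hsplit : aP n w = (∑ j ∈ range m, w ^ j) + ∑ j ∈ Ico m (n+1), w ^ j := by
      rw [aP, range_eq_Ico, ← Finset.sum_Ico_consecutive _ (Nat.zero_le m) hmn,
        ← range_eq_Ico]
    set S := ∑ j ∈ Ico m (n+1), w ^ j with hS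
    set T := ∑ j ∈ range m, w ^ j with hT
    -- T ≤ S
    have hTS : T ≤ S := by
      calc T ≤ ∑ j ∈ range m, w ^ (m + j) := by
              apply Finset.sum_le_sum
              intro j hj
              exact pow_le_pow_right₀ hw1 (Nat.le_add_left j m)
        _ = ∑ j ∈ Ico m (m + m), w ^ j := by
              rw [Finset.sum_Ico_eq_sum_range]
              simp
        _ ≤ S := by
              apply Finset.sum_le_sum_of_subset_of_nonneg
              · exact Finset.Ico_subset_Ico le_rfl (by omega)
              · intro i _ _
                positivity
    -- cP ≥ sum over top half
    have hcP : (∑ j ∈ Ico m (n+1), (j:ℝ)^2 * w ^ j) ≤ cP n w := by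
      rw [cP, range_eq_Ico]
      apply Finset.sum_le_sum_of_subset_of_nonneg
      · exact Finset.Ico_subset_Ico (Nat.zero_le m) le_rfl
      · intro i _ _
        positivity
    -- each top-half term is ≥ (n²/4) w^j
    have hterm : ((n:ℝ)^2 / 4) * S ≤ ∑ j ∈ Ico m (n+1), (j:ℝ)^2 * w ^ j := by
      rw [hS, Finset.mul_sum]
      apply Finset.sum_le_sum
      intro j hj
      have hjm : m ≤ j := (Finset.mem_Ico.mp hj).1
      have hnj : (n:ℝ) ≤ 2 * (j:ℝ) := by
        exact_mod_cast (le_trans h2m (by omega) : n ≤ 2 * j)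
      have hwj : (0:ℝ) ≤ w ^ j := by positivity
      have hn0 : (0:ℝ) ≤ (n:ℝ) := Nat.cast_nonneg n
      have h2 : (n:ℝ)^2 / 4 ≤ (j:ℝ)^2 := by nlinarith
      exact mul_le_mul_of_nonneg_right h2 hwj
    have hS0 : 0 ≤ S := by
      apply Finset.sum_nonneg; intro i _; positivity
    have hn2 : (0:ℝ) ≤ (n:ℝ)^2 := by positivity
    calc (1 / 16) * ((n : ℝ) ^ 2 * aP n w) = (1/16) * ((n:ℝ)^2 * (T + S)) := by
          rw [hsplit]
      _ ≤ ((n:ℝ)^2 / 4) * S := by nlinarith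
      _ ≤ ∑ j ∈ Ico m (n+1), (j:ℝ)^2 * w ^ j := hterm
      _ ≤ cP n w := hcP
end

section
/- Define F_n(w) = √(a_n(w) c_n(w) (a_n(w) c_n(w) − b_n(w)²)) / (2 w a_n(w)²). Then lim_{n→∞} (1/(n log n)) ∫_{1 − 1/n}^{1 + 1/n} F_n(w) dw = 0. -/
open Finset Filter MeasureTheory

lemma aP_ge_one {k : ℕ} {w : ℝ} (hw : 0 ≤ w) : 1 ≤ aP k w := by
  have h0 : (0:ℕ) ∈ range (k+1) := by simp
  have := Finset.single_le_sum (f := fun j => w ^ j)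
    (fun i _ => pow_nonneg hw i) h0
  simpa [aP] using this

lemma cP_nonneg {k : ℕ} {w : ℝ} (hw : 0 ≤ w) : 0 ≤ cP k w :=
  Finset.sum_nonneg fun i _ => mul_nonneg (by positivity) (pow_nonneg hw i)

lemma cP_le {k : ℕ} {w : ℝ} (hw : 0 ≤ w) : cP k w ≤ (k:ℝ)^2 * aP k w := by
  rw [aP, cP, Finset.mul_sum]
  apply Finset.sum_le_sum
  intro i hi
  have hik : (i:ℝ) ≤ (k:ℝ) := by
    exact_mod_cast Nat.lt_succ_iff.mp (Finset.mem_range.mp hi)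
  have : (i:ℝ)^2 ≤ (k:ℝ)^2 := by
    apply pow_le_pow_left₀ (by positivity) hik
  exact mul_le_mul_of_nonneg_right this (pow_nonneg hw i)

lemma F_bound {n : ℕ} {w : ℝ} (hw : (1:ℝ)/2 ≤ w) : |F n w| ≤ (n:ℝ)^2 := by
  have hw0 : (0:ℝ) < w := lt_of_lt_of_le (by norm_num) hw
  have ha : (1:ℝ) ≤ aP n w := aP_ge_one hw0.le
  have ha0 : (0:ℝ) < aP n w := lt_of_lt_of_le one_pos ha
  have hc0 : (0:ℝ) ≤ cP n w := cP_nonneg hw0.le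
  have hden : (0:ℝ) < 2 * w * aP n w ^ 2 := by positivity
  have hFnn : 0 ≤ F n w := div_nonneg (Real.sqrt_nonneg _) hden.le
  rw [abs_of_nonneg hFnn]
  have hsqrt : Real.sqrt (aP n w * cP n w * (aP n w * cP n w - bP n w ^ 2))
      ≤ aP n w * cP n w := by
    have h1 : aP n w * cP n w * (aP n w * cP n w - bP n w ^ 2)
        ≤ (aP n w * cP n w) ^ 2 := by
      have : aP n w * cP n w - bP n w ^ 2 ≤ aP n w * cP n w := by nlinarith [sq_nonneg (bP n w)]
      nlinarith [mul_nonneg ha0.le hc0]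
    calc Real.sqrt (aP n w * cP n w * (aP n w * cP n w - bP n w ^ 2))
        ≤ Real.sqrt ((aP n w * cP n w) ^ 2) := Real.sqrt_le_sqrt h1
      _ = aP n w * cP n w := Real.sqrt_sq (mul_nonneg ha0.le hc0)
  have h2 : F n w ≤ aP n w * cP n w / (2 * w * aP n w ^ 2) :=
    div_le_div_of_nonneg_right hsqrt hden.le |>.trans_eq rfl
  have h3 : aP n w * cP n w / (2 * w * aP n w ^ 2) ≤ (n:ℝ)^2 := by
    rw [div_le_iff₀ hden]
    have hcle := cP_le (k := n) hw0.le
    calc aP n w * cP n w ≤ aP n w * ((n:ℝ)^2 * aP n w) :=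
          mul_le_mul_of_nonneg_left hcle ha0.le
      _ ≤ (n:ℝ)^2 * (2 * w * aP n w ^ 2) := by nlinarith [mul_nonneg (mul_nonneg (sq_nonneg ((n:ℝ))) (sq_nonneg (aP n w))) (by linarith : (0:ℝ) ≤ 2*w-1)]
  exact h2.trans h3

/-- The contribution of the middle interval `[1 − 1/n, 1 + 1/n]` is negligible
at the scale `n log n`. -/
theorem middle_interval_negligible :
    Tendsto (fun n : ℕ =>
        (1 / ((n : ℝ) * Real.log n)) *
          ∫ w in (1 - 1 / (n : ℝ))..(1 + 1 / (n : ℝ)), F n w)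
      atTop (nhds 0) := by
  have hg : Tendsto (fun n : ℕ => 2 / Real.log n) atTop (nhds 0) :=
    tendsto_const_nhds.div_atTop (Real.tendsto_log_atTop.comp tendsto_natCast_atTop_atTop)
  apply squeeze_zero_norm' _ hg
  filter_upwards [eventually_ge_atTop 2] with n hn
  have hn2 : (2:ℝ) ≤ (n:ℝ) := by exact_mod_cast hn
  have hnpos : (0:ℝ) < n := by linarith
  have hlog : 0 < Real.log n := Real.log_pos (by linarith)
  have hint : ‖∫ w in (1 - 1 / (n : ℝ))..(1 + 1 / (n : ℝ)), F n w‖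
      ≤ (n:ℝ)^2 * |(1 + 1/(n:ℝ)) - (1 - 1/(n:ℝ))| := by
    apply intervalIntegral.norm_integral_le_of_norm_le_const
    intro w hw
    have hle : 1 - 1/(n:ℝ) ≤ 1 + 1/(n:ℝ) := by
      have : 0 < 1/(n:ℝ) := by positivity
      linarith
    rw [Set.uIoc_of_le hle] at hw
    have hw1 : 1 - 1/(n:ℝ) < w := hw.1
    have h12 : (1:ℝ)/2 ≤ w := by
      have : 1/(n:ℝ) ≤ 1/2 := by
        exact one_div_le_one_div_of_le (by norm_num) hn2
      linarith
    simpa [Real.norm_eq_abs] using F_bound h12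
  have habs : |(1 + 1/(n:ℝ)) - (1 - 1/(n:ℝ))| = 2/(n:ℝ) := by
    have h0 : (0:ℝ) < 1/(n:ℝ) := by positivity
    rw [abs_of_nonneg (by linarith)]; ring
  rw [habs] at hint
  have : ‖(1 / ((n : ℝ) * Real.log n)) *
      ∫ w in (1 - 1 / (n : ℝ))..(1 + 1 / (n : ℝ)), F n w‖
      ≤ (1 / ((n:ℝ) * Real.log n)) * ((n:ℝ)^2 * (2/(n:ℝ))) := by
    rw [norm_mul]
    apply mul_le_mul _ hint (norm_nonneg _) (by positivity)
    rw [Real.norm_eq_abs, abs_of_nonneg (by positivity)]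
  refine this.trans_eq ?_
  field_simp
end
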